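/- arXiv:2005.11263 — 5 statements merged into one kernel-verified Lean document; each statement's English description precedes it below -/
import Mathlib

section
/- The function Λ(x) = e^{x²}(1 - erf(x)) is strictly monotonically decreasing on the real line. -/
open MeasureTheory intervalIntegral Set Filter Topology

/-- The complex error function: path integral of `e^{-ξ²}` from `0` to `z`
along the straight line, times `2/√π`. -/
noncomputable def cerf (z : ℂ) : ℂ :=
  (2 / (Real.sqrt Real.pi : ℂ)) * ∫ s in (0:ℝ)..1, z * Complex.exp (-((s : ℂ) * z)^2)

/-- `Λ(z) = e^{z²}(1 - erf z)`. -/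
noncomputable def Lam (z : ℂ) : ℂ := Complex.exp (z^2) * (1 - cerf z)
/-- The real error function. -/
noncomputable def rerf (x : ℝ) : ℝ :=
  (2 / Real.sqrt Real.pi) * ∫ t in (0:ℝ)..x, Real.exp (-t^2)

/-- The real version of `Λ`: `Λ(x) = e^{x²}(1 - erf x)`. -/
noncomputable def LamR (x : ℝ) : ℝ := Real.exp (x^2) * (1 - rerf x)

lemma gauss_int : Integrable (fun t : ℝ => Real.exp (-t^2)) := by
  simpa using integrable_exp_neg_mul_sq (one_pos)

lemma one_sub_rerf (x : ℝ) :
    1 - rerf x = (2 / Real.sqrt Real.pi) * ∫ t in Ioi x, Real.exp (-t^2) := by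
  have htot : ∫ t : ℝ, Real.exp (-t^2) = Real.sqrt Real.pi := by
    simpa using integral_gaussian 1
  have hIoi0 : ∫ t in Ioi (0:ℝ), Real.exp (-t^2) = Real.sqrt Real.pi / 2 := by
    simpa using integral_gaussian_Ioi 1
  have hsplit : (∫ t in Iic x, Real.exp (-t^2)) + ∫ t in Ioi x, Real.exp (-t^2)
      = Real.sqrt Real.pi := by
    rw [← htot]
    exact (integral_Iic_add_Ioi gauss_int.integrableOn gauss_int.integrableOn)
  have hsplit0 : (∫ t in Iic (0:ℝ), Real.exp (-t^2)) = Real.sqrt Real.pi / 2 := by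
    have := integral_Iic_add_Ioi (μ := volume) (b := (0:ℝ))
      gauss_int.integrableOn gauss_int.integrableOn
    rw [htot, hIoi0] at this
    linarith
  have hint : ∫ t in (0:ℝ)..x, Real.exp (-t^2)
      = (∫ t in Iic x, Real.exp (-t^2)) - Real.sqrt Real.pi / 2 := by
    rw [← hsplit0]
    exact (integral_Iic_sub_Iic gauss_int.integrableOn gauss_int.integrableOn).symm
  have hpi : Real.sqrt Real.pi ≠ 0 := by positivity
  have hIic : (∫ t in Iic x, Real.exp (-t^2))
      = Real.sqrt Real.pi - ∫ t in Ioi x, Real.exp (-t^2) := by linarith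
  rw [rerf, hint, hIic]
  field_simp
  ring

lemma LamR_eq (x : ℝ) :
    LamR x = (2 / Real.sqrt Real.pi) * ∫ s in Ioi (0:ℝ), Real.exp (-s^2 - 2*x*s) := by
  rw [LamR, one_sub_rerf, ← mul_assoc, mul_comm (Real.exp (x^2)), mul_assoc]
  congr 1
  rw [← MeasureTheory.integral_const_mul]
  have h1 := (measurePreserving_add_right volume x).setIntegral_preimage_emb
    (measurableEmbedding_addRight x)
    (fun t => Real.exp (x^2) * Real.exp (-t^2)) (Ioi x)
  have h2 : ((· + x) ⁻¹' Ioi x) = Ioi (0:ℝ) := by ext s; simp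
  rw [← h1, h2]
  refine setIntegral_congr_fun measurableSet_Ioi fun s _ => ?_
  rw [← Real.exp_add]
  ring_nf

lemma integ (x : ℝ) : IntegrableOn (fun s : ℝ => Real.exp (-s^2 - 2*x*s)) (Ioi 0) := by
  have : (fun s : ℝ => Real.exp (-s^2 - 2*x*s))
      = fun s => Real.exp (x^2) * Real.exp (-(s+x)^2) := by
    funext s; rw [← Real.exp_add]; ring_nf
  rw [this]
  exact ((gauss_int.comp_add_right x).const_mul _).integrableOn

theorem LamR_strictAnti : StrictAnti LamR := by
  intro x y hxy
  rw [LamR_eq, LamR_eq]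
  have hpi : 0 < 2 / Real.sqrt Real.pi := by positivity
  apply mul_lt_mul_of_pos_left _ hpi
  rw [← sub_pos, ← integral_sub (integ x) (integ y)]
  rw [setIntegral_pos_iff_support_of_nonneg_ae]
  · refine lt_of_lt_of_le ?_ (measure_mono (s := Ioi (0:ℝ)) ?_)
    · simp
    · intro s hs
      refine ⟨?_, hs⟩
      have hs' : (0:ℝ) < s := hs
      have : -s^2 - 2*y*s < -s^2 - 2*x*s := by nlinarith
      simp only [Function.mem_support]
      exact ne_of_gt (sub_pos.2 (Real.exp_lt_exp.2 this))
  · filter_upwards [ae_restrict_mem measurableSet_Ioi] with s hs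
    have hs' : (0:ℝ) < s := hs
    have : -s^2 - 2*y*s ≤ -s^2 - 2*x*s := by nlinarith
    exact sub_nonneg.2 (Real.exp_le_exp.2 this)
  · exact (integ x).sub (integ y)
end

section
/- For every a > 0 and b, c ∈ ℂ with c ≠ b/(2√a), one has ∫₀^∞ e^{-a x² - b x} Λ(√a·x + c) dx = -(1/(2√a)) · (Λ(c) - Λ(b/(2√a)))/(c - b/(2√a)). -/
open MeasureTheory intervalIntegral Set Filter Topology

lemma hasDerivAt_aux (u w : ℂ) :
    HasDerivAt (fun w => w * Complex.exp (-(w * u)^2))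
      (Complex.exp (-(w * u)^2) * (1 - 2 * w^2 * u^2)) w := by
  have h1 : HasDerivAt (fun w : ℂ => -(w * u)^2) (-(2 * (w * u) * u)) w := by
    have := ((hasDerivAt_id w).mul_const u).fun_pow 2
    simpa using this.fun_neg
  have h2 : HasDerivAt (fun w : ℂ => Complex.exp (-(w * u)^2))
      (Complex.exp (-(w * u)^2) * (-(2 * (w * u) * u))) w := h1.cexp
  have := (hasDerivAt_id w).fun_mul h2
  refine this.congr_deriv (Eq.symm ?_)
  simp only [id]; ring

lemma norm_F'_le (x : ℂ) (s : ℝ) (hs : s ∈ Set.Ioc (0:ℝ) 1) (R : ℝ) (hx : ‖x‖ ≤ R) :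
    ‖Complex.exp (-((s:ℂ) * x)^2) * (1 - 2 * (s:ℂ)^2 * x^2)‖ ≤ Real.exp (R^2) * (1 + 2 * R^2) := by
  have hs0 : 0 ≤ s := hs.1.le
  have hs1 : s ≤ 1 := hs.2
  have hR : 0 ≤ R := le_trans (norm_nonneg x) hx
  have hsx : ‖(s:ℂ) * x‖ ≤ R := by
    rw [norm_mul, Complex.norm_real, Real.norm_eq_abs, abs_of_nonneg hs0]
    calc s * ‖x‖ ≤ 1 * R := by
          apply mul_le_mul hs1 hx (norm_nonneg x) zero_le_one
      _ = R := one_mul R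
  rw [norm_mul]
  apply mul_le_mul
  · rw [Complex.norm_exp]
    apply Real.exp_le_exp.2
    calc (-((s:ℂ) * x)^2).re ≤ ‖(-((s:ℂ)*x)^2)‖ := Complex.re_le_norm _
      _ = ‖(s:ℂ)*x‖^2 := by rw [norm_neg, norm_pow]
      _ ≤ R^2 := by apply pow_le_pow_left₀ (norm_nonneg _) hsx
  · calc ‖1 - 2 * (s:ℂ)^2 * x^2‖ ≤ ‖(1:ℂ)‖ + ‖2 * (s:ℂ)^2 * x^2‖ := norm_sub_le _ _
      _ = 1 + 2 * (s^2 * ‖x‖^2) := by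
          simp only [norm_mul, norm_pow, Complex.norm_real, Real.norm_eq_abs,
            abs_of_nonneg hs0, norm_one, Complex.norm_ofNat]
          ring
      _ ≤ 1 + 2 * (1 * R^2) := by
          have h1 : s^2 ≤ 1 := pow_le_one₀ hs0 hs1
          have h2 : ‖x‖^2 ≤ R^2 := pow_le_pow_left₀ (norm_nonneg _) hx 2
          nlinarith [sq_nonneg s, sq_nonneg ‖x‖, sq_nonneg R]
      _ = 1 + 2 * R^2 := by ring
  · exact norm_nonneg _
  · positivity

lemma hasDerivAt_cerf (z : ℂ) :
    HasDerivAt cerf ((2 / (Real.sqrt Real.pi : ℂ)) * Complex.exp (-z^2)) z := by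
  have key : HasDerivAt (fun z : ℂ => ∫ s in (0:ℝ)..1, z * Complex.exp (-((s : ℂ) * z)^2))
      (Complex.exp (-z^2)) z := by
    set R : ℝ := ‖z‖ + 1 with hR
    have hcont : ∀ (x : ℂ), Continuous fun s : ℝ => x * Complex.exp (-((s : ℂ) * x)^2) := by
      intro x; fun_prop
    have hcont' : ∀ (x : ℂ), Continuous
        (fun s : ℝ => Complex.exp (-((s:ℂ) * x)^2) * (1 - 2 * (s:ℂ)^2 * x^2)) := by
      intro x; fun_prop
    have main := intervalIntegral.hasDerivAt_integral_of_dominated_loc_of_deriv_le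
      (F := fun x (s : ℝ) => x * Complex.exp (-((s : ℂ) * x)^2))
      (F' := fun x (s : ℝ) => Complex.exp (-((s:ℂ) * x)^2) * (1 - 2 * (s:ℂ)^2 * x^2))
      (x₀ := z) (s := Metric.ball z 1) (a := (0:ℝ)) (b := 1) (bound := fun _ => Real.exp (R^2) * (1 + 2 * R^2))
      (μ := volume) (Metric.ball_mem_nhds z one_pos)
      (Filter.Eventually.of_forall fun x => ((hcont x).aestronglyMeasurable))
      ((hcont z).intervalIntegrable 0 1)
      ((hcont' z).aestronglyMeasurable)
      ?_ (intervalIntegrable_const) ?_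
    · have FTC : (∫ s in (0:ℝ)..1,
          Complex.exp (-((s:ℂ) * z)^2) * (1 - 2 * (s:ℂ)^2 * z^2)) = Complex.exp (-z^2) := by
        have hd : ∀ s ∈ Set.uIcc (0:ℝ) 1, HasDerivAt (fun s : ℝ => (s:ℂ) * Complex.exp (-((s:ℂ) * z)^2))
            (Complex.exp (-((s:ℂ) * z)^2) * (1 - 2 * (s:ℂ)^2 * z^2)) s := by
          intro s _
          exact (hasDerivAt_aux z (s:ℂ)).comp_ofReal
        rw [intervalIntegral.integral_eq_sub_of_hasDerivAt hd ((hcont' z).intervalIntegrable 0 1)]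
        simp
      rw [← FTC]
      exact main.2
    · apply Filter.Eventually.of_forall
      intro s hs x hx
      rw [Set.uIoc_of_le (zero_le_one)] at hs
      apply norm_F'_le x s hs R
      have := mem_ball_iff_norm.1 hx
      calc ‖x‖ = ‖z + (x - z)‖ := by ring_nf
        _ ≤ ‖z‖ + ‖x - z‖ := norm_add_le _ _
        _ ≤ ‖z‖ + 1 := by linarith [this.le]
    · apply Filter.Eventually.of_forall
      intro s hs x hx
      have := hasDerivAt_aux ((s:ℂ)) x
      exact (this.congr_of_eventuallyEq (Filter.Eventually.of_forall fun w => by ring)).congr_deriv (by ring)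
  have : HasDerivAt (fun z => (2 / (Real.sqrt Real.pi : ℂ)) *
      ∫ s in (0:ℝ)..1, z * Complex.exp (-((s : ℂ) * z)^2))
      ((2 / (Real.sqrt Real.pi : ℂ)) * Complex.exp (-z^2)) z := key.const_mul _
  exact this

lemma hasDerivAt_Lam (z : ℂ) :
    HasDerivAt Lam (2 * z * Lam z - 2 / (Real.sqrt Real.pi : ℂ)) z := by
  have h1 : HasDerivAt (fun z : ℂ => Complex.exp (z^2)) (Complex.exp (z^2) * (2 * z)) z := by
    have : HasDerivAt (fun z : ℂ => z^2) (2 * z) z := by simpa using (hasDerivAt_id z).fun_pow 2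
    exact this.cexp
  have h2 : HasDerivAt (fun z : ℂ => 1 - cerf z)
      (-((2 / (Real.sqrt Real.pi : ℂ)) * Complex.exp (-z^2))) z :=
    (hasDerivAt_cerf z).const_sub 1
  have := h1.fun_mul h2
  refine this.congr_deriv (Eq.symm ?_)
  have h3 : Complex.exp (z ^ 2) * Complex.exp (-z ^ 2) = 1 := by
    rw [← Complex.exp_add]; ring_nf; exact Complex.exp_zero
  unfold Lam
  linear_combination (2 / (Real.sqrt Real.pi : ℂ)) * h3

noncomputable def Lam2 (z : ℂ) : ℂ :=
  (2 / (Real.sqrt Real.pi : ℂ)) * ∫ t in Set.Ioi (0:ℝ), Complex.exp (-(t:ℂ)^2 - 2*z*(t:ℂ))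

lemma integrable_exp_aux (z : ℂ) :
    Integrable (fun t : ℝ => Complex.exp (-(t:ℂ)^2 - 2*z*(t:ℂ))) := by
  have h : ∀ t : ℝ, (-(t:ℂ)^2 - 2*z*(t:ℂ)) = -1*(t:ℂ)^2 + (-2*z)*(t:ℂ) + 0 := fun t => by ring
  simp_rw [h]
  exact integrable_cexp_quadratic (by norm_num) _ _

lemma integrable_real_exp_aux (r : ℝ) :
    Integrable (fun t : ℝ => Real.exp (-t^2 - 2*r*t)) := by
  have h := (integrable_exp_aux (r:ℂ)).norm
  apply h.congr
  filter_upwards with t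
  have : (-(t:ℂ)^2 - 2*(r:ℂ)*(t:ℂ)) = ((-t^2 - 2*r*t : ℝ) : ℂ) := by push_cast; ring
  rw [this, ← Complex.ofReal_exp, Complex.norm_real, Real.norm_eq_abs, abs_of_pos (Real.exp_pos _)]

lemma tendsto_cexp_aux (z : ℂ) :
    Tendsto (fun t : ℝ => Complex.exp (-(t:ℂ)^2 - 2*z*(t:ℂ))) atTop (nhds 0) := by
  rw [tendsto_zero_iff_norm_tendsto_zero]
  have hnorm : ∀ t : ℝ, ‖Complex.exp (-(t:ℂ)^2 - 2*z*(t:ℂ))‖ = Real.exp (-t^2 - 2*z.re*t) := by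
    intro t
    rw [Complex.norm_exp]
    congr 1
    simp only [Complex.sub_re, Complex.neg_re, Complex.mul_re, pow_two, Complex.ofReal_re,
      Complex.ofReal_im, Complex.re_ofNat, Complex.im_ofNat, Complex.mul_im]
    ring
  simp_rw [hnorm]
  have h1 : Tendsto (fun t : ℝ => t * (t + 2*z.re)) atTop atTop :=
    tendsto_id.atTop_mul_atTop₀ (tendsto_atTop_add_const_right _ _ tendsto_id)
  have h2 : Tendsto (fun t : ℝ => -t^2 - 2*z.re*t) atTop atBot := by
    have h3 : Tendsto (fun t : ℝ => -(t * (t + 2*z.re))) atTop atBot := tendsto_neg_atBot_iff.2 h1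
    apply h3.congr
    intro t; ring
  exact Real.tendsto_exp_atBot.comp h2

set_option maxHeartbeats 1000000 in
lemma hasDerivAt_Lam2 (z : ℂ) :
    HasDerivAt Lam2 (2 * z * Lam2 z - 2 / (Real.sqrt Real.pi : ℂ)) z := by
  set K : ℝ := 2 * (‖z‖ + 1) with hKdef
  have hK0 : 0 ≤ K := by positivity
  have hcont : ∀ x : ℂ, Continuous (fun t : ℝ => Complex.exp (-(t:ℂ)^2 - 2*x*(t:ℂ))) := by
    intro x; fun_prop
  have hcont' : ∀ x : ℂ,
      Continuous (fun t : ℝ => (-2*(t:ℂ)) * Complex.exp (-(t:ℂ)^2 - 2*x*(t:ℂ))) := by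
    intro x; fun_prop
  have hbd_int : Integrable (fun t : ℝ => 2 * Real.exp (-t^2 + (K+1)*t))
      (volume.restrict (Set.Ioi (0:ℝ))) := by
    have h : ∀ t : ℝ, -t^2 + (K+1)*t = -t^2 - 2*(-(K+1)/2)*t := fun t => by ring
    simp_rw [h]
    exact ((integrable_real_exp_aux (-(K+1)/2)).const_mul 2).integrableOn
  have main := hasDerivAt_integral_of_dominated_loc_of_deriv_le
    (μ := volume.restrict (Set.Ioi (0:ℝ)))
    (F := fun (x : ℂ) (t : ℝ) => Complex.exp (-(t:ℂ)^2 - 2*x*(t:ℂ)))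
    (F' := fun (x : ℂ) (t : ℝ) => (-2*(t:ℂ)) * Complex.exp (-(t:ℂ)^2 - 2*x*(t:ℂ)))
    (x₀ := z) (s := Metric.ball z 1) (bound := fun t => 2 * Real.exp (-t^2 + (K+1)*t)) (Metric.ball_mem_nhds z one_pos)
    (Filter.Eventually.of_forall fun x => (hcont x).aestronglyMeasurable)
    ((integrable_exp_aux z).integrableOn)
    ((hcont' z).aestronglyMeasurable)
    ?_ hbd_int ?_
  · -- assemble
    have hLam2 : HasDerivAt Lam2
        ((2 / (Real.sqrt Real.pi : ℂ)) *
          ∫ t in Set.Ioi (0:ℝ), (-2*(t:ℂ)) * Complex.exp (-(t:ℂ)^2 - 2*z*(t:ℂ))) z :=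
      main.2.const_mul _
    -- FTC on Ioi
    have hderiv : ∀ x ∈ Set.Ici (0:ℝ),
        HasDerivAt (fun t : ℝ => Complex.exp (-(t:ℂ)^2 - 2*z*(t:ℂ)))
          ((-2*(x:ℂ) - 2*z) * Complex.exp (-(x:ℂ)^2 - 2*z*(x:ℂ))) x := by
      intro x _
      have hG : HasDerivAt (fun w : ℂ => Complex.exp (-w^2 - 2*z*w))
          ((-2*(x:ℂ) - 2*z) * Complex.exp (-(x:ℂ)^2 - 2*z*(x:ℂ))) (x:ℂ) := by
        have h1 : HasDerivAt (fun w : ℂ => -w^2 - 2*z*w) (-2*(x:ℂ) - 2*z) (x:ℂ) := by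
          have ha : HasDerivAt (fun w : ℂ => w^2) (2*(x:ℂ)) (x:ℂ) := by
            simpa using (hasDerivAt_id (x:ℂ)).fun_pow 2
          have hb : HasDerivAt (fun w : ℂ => 2*z*w) (2*z) (x:ℂ) := by
            simpa using (hasDerivAt_id (x:ℂ)).const_mul (2*z)
          have := ha.fun_neg.fun_sub hb
          refine this.congr_deriv (Eq.symm ?_)
          ring
        have := h1.cexp
        refine this.congr_deriv (Eq.symm ?_)
        ring
      exact hG.comp_ofReal
    have hint : IntegrableOn
        (fun t : ℝ => (-2*(t:ℂ) - 2*z) * Complex.exp (-(t:ℂ)^2 - 2*z*(t:ℂ)))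
        (Set.Ioi (0:ℝ)) := by
      have h1 : Integrable (fun t : ℝ => (-2*(t:ℂ)) * Complex.exp (-(t:ℂ)^2 - 2*z*(t:ℂ)))
          (volume.restrict (Set.Ioi (0:ℝ))) := main.1
      have h2 : Integrable (fun t : ℝ => (-2*z) * Complex.exp (-(t:ℂ)^2 - 2*z*(t:ℂ)))
          (volume.restrict (Set.Ioi (0:ℝ))) := ((integrable_exp_aux z).integrableOn).const_mul _
      have := h1.add h2
      apply this.congr
      filter_upwards with t
      simp only [Pi.add_apply]
      ring
    have FTC := integral_Ioi_of_hasDerivAt_of_tendsto' hderiv hint (tendsto_cexp_aux z)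
    have hval : (∫ t in Set.Ioi (0:ℝ),
        (-2*(t:ℂ) - 2*z) * Complex.exp (-(t:ℂ)^2 - 2*z*(t:ℂ))) = -1 := by
      rw [FTC]; norm_num
    have hsplit : (∫ t in Set.Ioi (0:ℝ),
          (-2*(t:ℂ) - 2*z) * Complex.exp (-(t:ℂ)^2 - 2*z*(t:ℂ)))
        = (∫ t in Set.Ioi (0:ℝ), (-2*(t:ℂ)) * Complex.exp (-(t:ℂ)^2 - 2*z*(t:ℂ)))
          - (2*z) * ∫ t in Set.Ioi (0:ℝ), Complex.exp (-(t:ℂ)^2 - 2*z*(t:ℂ)) := by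
      rw [← MeasureTheory.integral_const_mul, ← MeasureTheory.integral_sub main.1
        (((integrable_exp_aux z).integrableOn).const_mul _)]
      congr 1; funext t; ring
    have hres : (∫ t in Set.Ioi (0:ℝ), (-2*(t:ℂ)) * Complex.exp (-(t:ℂ)^2 - 2*z*(t:ℂ)))
        = -1 + (2*z) * ∫ t in Set.Ioi (0:ℝ), Complex.exp (-(t:ℂ)^2 - 2*z*(t:ℂ)) := by
      rw [← hval, hsplit]; ring
    rw [hres] at hLam2
    convert hLam2 using 1
    unfold Lam2
    ring
  · -- bound
    rw [ae_restrict_iff' measurableSet_Ioi]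
    apply Filter.Eventually.of_forall
    intro t ht x hx
    have ht0 : (0:ℝ) < t := ht
    have hxn : ‖x‖ ≤ ‖z‖ + 1 := by
      have := mem_ball_iff_norm.1 hx
      calc ‖x‖ = ‖z + (x - z)‖ := by ring_nf
        _ ≤ ‖z‖ + ‖x - z‖ := norm_add_le _ _
        _ ≤ ‖z‖ + 1 := by linarith [this.le]
    rw [norm_mul]
    have h1 : ‖(-2*(t:ℂ))‖ = 2*t := by
      rw [norm_mul]
      simp [abs_of_pos ht0]
    have h2 : ‖Complex.exp (-(t:ℂ)^2 - 2*x*(t:ℂ))‖ = Real.exp (-t^2 - 2*x.re*t) := by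
      rw [Complex.norm_exp]
      congr 1
      simp only [Complex.sub_re, Complex.neg_re, Complex.mul_re, pow_two, Complex.ofReal_re,
        Complex.ofReal_im, Complex.re_ofNat, Complex.im_ofNat, Complex.mul_im]
      ring
    rw [h1, h2]
    have hre : -2*x.re*t ≤ K*t := by
      have : -x.re ≤ ‖x‖ := by
        calc -x.re ≤ |x.re| := neg_le_abs _
          _ ≤ ‖x‖ := Complex.abs_re_le_norm x
      have : -2*x.re ≤ K := by rw [hKdef]; nlinarith
      nlinarith
    calc 2*t * Real.exp (-t^2 - 2*x.re*t) ≤ 2*t * Real.exp (-t^2 + K*t) := by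
          apply mul_le_mul_of_nonneg_left (Real.exp_le_exp.2 (by linarith)) (by linarith)
      _ ≤ 2*Real.exp t * Real.exp (-t^2 + K*t) := by
          have : t ≤ Real.exp t := (Real.add_one_le_exp t).trans' (by linarith)
          nlinarith [Real.exp_pos (-t^2 + K*t), Real.exp_pos t]
      _ = 2 * Real.exp (-t^2 + (K+1)*t) := by
          rw [mul_assoc, ← Real.exp_add]
          congr 2
          ring
  · -- differentiability in x
    apply Filter.Eventually.of_forall
    intro t x hx
    have h1 : HasDerivAt (fun x : ℂ => -(t:ℂ)^2 - 2*x*(t:ℂ)) (-2*(t:ℂ)) x := by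
      have ha : HasDerivAt (fun x : ℂ => 2*x*(t:ℂ)) (2*1*(t:ℂ)) x :=
        ((hasDerivAt_id x).const_mul (2:ℂ)).mul_const ((t:ℂ))
      have hb : HasDerivAt (fun x : ℂ => -(t:ℂ)^2 - 2*x*(t:ℂ)) (-(2*1*(t:ℂ))) x :=
        ha.const_sub (-(t:ℂ)^2)
      convert hb using 1
      ring
    have := h1.cexp
    refine this.congr_deriv (Eq.symm ?_)
    ring

lemma Lam_zero : Lam 0 = 1 := by
  simp [Lam, cerf]

lemma Lam2_zero : Lam2 0 = 1 := by
  unfold Lam2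
  have h : ∀ t : ℝ, Complex.exp (-(t:ℂ)^2 - 2*(0:ℂ)*(t:ℂ)) = ((Real.exp (-1*t^2) : ℝ) : ℂ) := by
    intro t
    rw [Complex.ofReal_exp]
    congr 1
    push_cast
    ring
  simp_rw [h]
  have hcoe : (∫ t in Set.Ioi (0:ℝ), ((Real.exp (-1*t^2) : ℝ) : ℂ))
      = (((∫ t in Set.Ioi (0:ℝ), Real.exp (-1*t^2)) : ℝ) : ℂ) := integral_ofReal
  rw [hcoe, integral_gaussian_Ioi]
  have hpi : Real.sqrt Real.pi ≠ 0 := ne_of_gt (Real.sqrt_pos.2 Real.pi_pos)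
  rw [div_one]
  have : ((Real.sqrt Real.pi / 2 : ℝ) : ℂ) = (Real.sqrt Real.pi : ℂ) / 2 := by push_cast; ring
  rw [this]
  have hpic : (Real.sqrt Real.pi : ℂ) ≠ 0 := by exact_mod_cast hpi
  field_simp

lemma Lam_eq_Lam2 (z : ℂ) : Lam z = Lam2 z := by
  have key : ∀ w : ℂ, HasDerivAt (fun w => Complex.exp (-w^2) * (Lam w - Lam2 w)) 0 w := by
    intro w
    have h1 : HasDerivAt (fun w : ℂ => Complex.exp (-w^2)) (Complex.exp (-w^2) * (-(2*w))) w := by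
      have h : HasDerivAt (fun w : ℂ => -w^2) (-(2*w)) w := by
        simpa using ((hasDerivAt_id w).fun_pow 2).fun_neg
      exact h.cexp
    have h2 := (hasDerivAt_Lam w).fun_sub (hasDerivAt_Lam2 w)
    have := h1.fun_mul h2
    refine this.congr_deriv (Eq.symm ?_)
    ring
  have hdiff : Differentiable ℂ (fun w => Complex.exp (-w^2) * (Lam w - Lam2 w)) :=
    fun w => (key w).differentiableAt
  have hderiv : ∀ w, deriv (fun w => Complex.exp (-w^2) * (Lam w - Lam2 w)) w = 0 :=
    fun w => (key w).deriv
  have h0 := is_const_of_deriv_eq_zero hdiff hderiv z 0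
  simp only [Lam_zero, Lam2_zero, sub_self, mul_zero] at h0
  have hexp : Complex.exp (-z^2) ≠ 0 := Complex.exp_ne_zero _
  exact sub_eq_zero.1 ((mul_eq_zero.1 h0).resolve_left hexp)

lemma norm_cexp_aux (z : ℂ) (t : ℝ) :
    ‖Complex.exp (-(t:ℂ)^2 - 2*z*(t:ℂ))‖ = Real.exp (-t^2 - 2*z.re*t) := by
  rw [Complex.norm_exp]
  congr 1
  simp only [Complex.sub_re, Complex.neg_re, Complex.mul_re, pow_two, Complex.ofReal_re,
    Complex.ofReal_im, Complex.re_ofNat, Complex.im_ofNat, Complex.mul_im]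
  ring

lemma norm_cexp_quad (a : ℝ) (b : ℂ) (x : ℝ) :
    ‖Complex.exp (-(a:ℂ)*(x:ℂ)^2 - b*(x:ℂ))‖ = Real.exp (-a*x^2 - b.re*x) := by
  rw [Complex.norm_exp]
  congr 1
  simp only [Complex.sub_re, Complex.neg_re, Complex.mul_re, pow_two, Complex.ofReal_re,
    Complex.ofReal_im, Complex.re_ofNat, Complex.im_ofNat, Complex.mul_im]
  ring

lemma integrable_real_gauss (a' r : ℝ) (ha' : 0 < a') :
    Integrable (fun t : ℝ => Real.exp (-a'*t^2 + r*t)) := by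
  have h := (integrable_cexp_quadratic (b := (a':ℂ)) (by simpa using ha') (r:ℂ) 0).norm
  apply h.congr
  filter_upwards with t
  have : (-(a':ℂ)*(t:ℂ)^2 + (r:ℂ)*(t:ℂ) + 0) = ((-a'*t^2 + r*t : ℝ) : ℂ) := by push_cast; ring
  rw [this, ← Complex.ofReal_exp, Complex.norm_real, Real.norm_eq_abs,
    abs_of_pos (Real.exp_pos _)]

lemma norm_Lam_le (r : ℝ) (z : ℂ) (h : r ≤ z.re) :
    ‖Lam z‖ ≤ (2/Real.sqrt Real.pi) * ∫ t in Set.Ioi (0:ℝ), Real.exp (-t^2 - 2*r*t) := by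
  rw [Lam_eq_Lam2]
  unfold Lam2
  rw [norm_mul]
  have h2 : ‖(2 / (Real.sqrt Real.pi : ℂ))‖ = 2 / Real.sqrt Real.pi := by
    rw [norm_div, Complex.norm_real, Real.norm_eq_abs, abs_of_nonneg (Real.sqrt_nonneg _)]
    simp
  rw [h2]
  apply mul_le_mul_of_nonneg_left ?_ (by positivity)
  calc ‖∫ t in Set.Ioi (0:ℝ), Complex.exp (-(t:ℂ)^2 - 2*z*(t:ℂ))‖
      ≤ ∫ t in Set.Ioi (0:ℝ), ‖Complex.exp (-(t:ℂ)^2 - 2*z*(t:ℂ))‖ :=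
        norm_integral_le_integral_norm _
    _ = ∫ t in Set.Ioi (0:ℝ), Real.exp (-t^2 - 2*z.re*t) := by
        congr 1
        funext t
        exact norm_cexp_aux z t
    _ ≤ ∫ t in Set.Ioi (0:ℝ), Real.exp (-t^2 - 2*r*t) := by
        apply setIntegral_mono_on
        · exact (integrable_real_exp_aux z.re).integrableOn
        · exact (integrable_real_exp_aux r).integrableOn
        · exact measurableSet_Ioi
        · intro t ht
          apply Real.exp_le_exp.2
          have ht0 : (0:ℝ) < t := ht
          nlinarith

lemma continuous_Lam : Continuous Lam :=
  continuous_iff_continuousAt.2 fun w => (hasDerivAt_Lam w).differentiableAt.continuousAt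

set_option maxHeartbeats 1000000 in
theorem gaussian_integral_Lam_shift (a : ℝ) (ha : 0 < a) (b c : ℂ)
    (hc : c ≠ b / (2 * (Real.sqrt a : ℂ))) :
    ∫ x in Set.Ioi (0:ℝ),
        Complex.exp (-(a:ℂ) * (x:ℂ)^2 - b * (x:ℂ)) * Lam ((Real.sqrt a : ℂ) * (x:ℂ) + c) =
      -(1 / (2 * (Real.sqrt a : ℂ))) *
        ((Lam c - Lam (b / (2 * (Real.sqrt a : ℂ)))) / (c - b / (2 * (Real.sqrt a : ℂ)))) := by
  have hs0 : 0 < Real.sqrt a := Real.sqrt_pos.2 ha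
  set s : ℂ := (Real.sqrt a : ℂ) with hs
  have hsne : s ≠ 0 := by
    rw [hs]; exact_mod_cast ne_of_gt hs0
  have hs2 : s^2 = (a:ℂ) := by
    rw [hs]; exact_mod_cast Real.sq_sqrt ha.le
  set β : ℂ := b / (2*s) with hβ
  have h2sβ : b = 2*s*β := by
    rw [hβ]; field_simp
  have hcβ : c - β ≠ 0 := sub_ne_zero.2 hc
  set Mc : ℝ := (2/Real.sqrt Real.pi) * ∫ t in Set.Ioi (0:ℝ), Real.exp (-t^2 - 2*c.re*t)
    with hMc
  set Mβ : ℝ := (2/Real.sqrt Real.pi) * ∫ t in Set.Ioi (0:ℝ), Real.exp (-t^2 - 2*β.re*t)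
    with hMβ
  set g : ℝ → ℂ := fun x => Complex.exp (-(a:ℂ)*(x:ℂ)^2 - b*(x:ℂ)) * Lam (s*(x:ℂ) + c)
    with hg
  set Φ : ℝ → ℂ := fun x =>
    Complex.exp (-(a:ℂ)*(x:ℂ)^2 - b*(x:ℂ)) * (Lam (s*(x:ℂ)+c) - Lam (s*(x:ℂ)+β)) with hΦ
  -- derivative of Φ
  have hΦderiv : ∀ x : ℝ, HasDerivAt Φ (2*s*(c-β) * g x) x := by
    intro x
    have hE : HasDerivAt (fun w : ℂ => Complex.exp (-(a:ℂ)*w^2 - b*w))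
        ((-2*(a:ℂ)*(x:ℂ) - b) * Complex.exp (-(a:ℂ)*(x:ℂ)^2 - b*(x:ℂ))) (x:ℂ) := by
      have h1 : HasDerivAt (fun w : ℂ => -(a:ℂ)*w^2 - b*w) (-2*(a:ℂ)*(x:ℂ) - b) (x:ℂ) := by
        have ha1 : HasDerivAt (fun w : ℂ => w^2) (2*(x:ℂ)) (x:ℂ) := by
          simpa using (hasDerivAt_id (x:ℂ)).fun_pow 2
        have ha2 := ha1.const_mul (-(a:ℂ))
        have ha3 := (hasDerivAt_id (x:ℂ)).const_mul b
        have := ha2.fun_sub ha3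
        refine this.congr_deriv (Eq.symm ?_)
        ring
      have := h1.cexp
      refine this.congr_deriv (Eq.symm ?_)
      ring
    have hL1 : HasDerivAt (fun w : ℂ => Lam (s*w + c))
        (s * (2*(s*(x:ℂ)+c) * Lam (s*(x:ℂ)+c) - 2 / (Real.sqrt Real.pi : ℂ))) (x:ℂ) := by
      have hin : HasDerivAt (fun w : ℂ => s*w + c) s (x:ℂ) := by
        simpa using ((hasDerivAt_id (x:ℂ)).const_mul s).add_const c
      have := (hasDerivAt_Lam (s*(x:ℂ)+c)).comp (x:ℂ) hin
      refine this.congr_deriv (Eq.symm ?_)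
      ring
    have hL2 : HasDerivAt (fun w : ℂ => Lam (s*w + β))
        (s * (2*(s*(x:ℂ)+β) * Lam (s*(x:ℂ)+β) - 2 / (Real.sqrt Real.pi : ℂ))) (x:ℂ) := by
      have hin : HasDerivAt (fun w : ℂ => s*w + β) s (x:ℂ) := by
        simpa using ((hasDerivAt_id (x:ℂ)).const_mul s).add_const β
      have := (hasDerivAt_Lam (s*(x:ℂ)+β)).comp (x:ℂ) hin
      refine this.congr_deriv (Eq.symm ?_)
      ring
    have hG := hE.fun_mul (hL1.fun_sub hL2)
    have hkey : HasDerivAt (fun w : ℂ =>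
        Complex.exp (-(a:ℂ)*w^2 - b*w) * (Lam (s*w+c) - Lam (s*w+β)))
        (2*s*(c-β) * (Complex.exp (-(a:ℂ)*(x:ℂ)^2 - b*(x:ℂ)) * Lam (s*(x:ℂ) + c))) (x:ℂ) := by
      refine hG.congr_deriv (Eq.symm ?_)
      rw [← hs2]
      rw [h2sβ]
      ring
    exact hkey.comp_ofReal
  -- bound on ‖Φ x‖ and ‖g x‖
  have hre : ∀ x : ℝ, 0 ≤ x → (c.re ≤ (s*(x:ℂ)+c).re ∧ β.re ≤ (s*(x:ℂ)+β).re) := by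
    intro x hx
    have h1 : (s*(x:ℂ)).re = Real.sqrt a * x := by
      rw [hs]
      simp [Complex.mul_re]
    constructor
    · rw [Complex.add_re, h1]; nlinarith
    · rw [Complex.add_re, h1]; nlinarith
  -- integrability of g
  have hgcont : Continuous g := by
    rw [hg]
    apply Continuous.mul
    · fun_prop
    · exact continuous_Lam.comp (by fun_prop)
  have hgint : IntegrableOn g (Set.Ioi (0:ℝ)) := by
    apply Integrable.mono' ((((integrable_real_gauss a (-b.re) ha).const_mul Mc)).integrableOn)
      (hgcont.aestronglyMeasurable)
    rw [ae_restrict_iff' measurableSet_Ioi]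
    filter_upwards with x hx
    rw [hg]
    simp only [norm_mul]
    rw [norm_cexp_quad]
    have hb1 : ‖Lam (s*(x:ℂ)+c)‖ ≤ Mc := by
      rw [hMc]
      exact norm_Lam_le c.re _ ((hre x (le_of_lt hx)).1)
    calc Real.exp (-a*x^2 - b.re*x) * ‖Lam (s*(x:ℂ)+c)‖
        ≤ Real.exp (-a*x^2 - b.re*x) * Mc := by
          apply mul_le_mul_of_nonneg_left hb1 (Real.exp_pos _).le
      _ = Mc * Real.exp (-a*x^2 + (-b.re)*x) := by rw [mul_comm]; congr 2; ring
  -- tendsto of Φ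
  have hΦtendsto : Tendsto Φ atTop (nhds 0) := by
    rw [tendsto_zero_iff_norm_tendsto_zero]
    apply squeeze_zero' (Filter.Eventually.of_forall fun x => norm_nonneg _)
    · filter_upwards [Filter.eventually_ge_atTop (0:ℝ)] with x hx
      show ‖Φ x‖ ≤ (Mc + Mβ) * Real.exp (-a*x^2 - b.re*x)
      rw [hΦ]
      simp only [norm_mul]
      rw [norm_cexp_quad]
      have hb1 : ‖Lam (s*(x:ℂ)+c)‖ ≤ Mc := by
        rw [hMc]; exact norm_Lam_le c.re _ ((hre x hx).1)
      have hb2 : ‖Lam (s*(x:ℂ)+β)‖ ≤ Mβ := by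
        rw [hMβ]; exact norm_Lam_le β.re _ ((hre x hx).2)
      calc Real.exp (-a*x^2 - b.re*x) * ‖Lam (s*(x:ℂ)+c) - Lam (s*(x:ℂ)+β)‖
          ≤ Real.exp (-a*x^2 - b.re*x) * (Mc + Mβ) := by
            apply mul_le_mul_of_nonneg_left ?_ (Real.exp_pos _).le
            calc ‖Lam (s*(x:ℂ)+c) - Lam (s*(x:ℂ)+β)‖
                ≤ ‖Lam (s*(x:ℂ)+c)‖ + ‖Lam (s*(x:ℂ)+β)‖ := norm_sub_le _ _
              _ ≤ Mc + Mβ := add_le_add hb1 hb2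
        _ = (Mc + Mβ) * Real.exp (-a*x^2 - b.re*x) := mul_comm _ _
    · have h1 : Tendsto (fun x : ℝ => x * (a*x + b.re)) atTop atTop := by
        apply tendsto_id.atTop_mul_atTop₀
        exact tendsto_atTop_add_const_right _ _ (tendsto_id.const_mul_atTop ha)
      have h2 : Tendsto (fun x : ℝ => -a*x^2 - b.re*x) atTop atBot := by
        have h3 : Tendsto (fun x : ℝ => -(x * (a*x + b.re))) atTop atBot :=
          tendsto_neg_atBot_iff.2 h1
        apply h3.congr
        intro x; ring
      have := (Real.tendsto_exp_atBot.comp h2).const_mul (Mc + Mβ)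
      simpa using this
  -- FTC
  have hcont0 : ContinuousWithinAt Φ (Set.Ici (0:ℝ)) 0 :=
    (hΦderiv 0).continuousAt.continuousWithinAt
  have hint' : IntegrableOn (fun x => 2*s*(c-β) * g x) (Set.Ioi (0:ℝ)) :=
    hgint.const_mul _
  have FTC := integral_Ioi_of_hasDerivAt_of_tendsto hcont0
    (fun x _ => hΦderiv x) hint' hΦtendsto
  have hΦ0 : Φ 0 = Lam c - Lam β := by
    rw [hΦ]
    norm_num
  rw [hΦ0] at FTC
  have hgval : (∫ x in Set.Ioi (0:ℝ), g x) = -(Lam c - Lam β) / (2*s*(c-β)) := by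
    have h4 : (∫ x in Set.Ioi (0:ℝ), 2*s*(c-β) * g x)
        = 2*s*(c-β) * ∫ x in Set.Ioi (0:ℝ), g x := MeasureTheory.integral_const_mul _ _
    rw [h4] at FTC
    have hne : 2*s*(c-β) ≠ 0 := by
      apply mul_ne_zero (mul_ne_zero two_ne_zero hsne) hcβ
    field_simp at FTC ⊢
    linear_combination FTC
  calc (∫ x in Set.Ioi (0:ℝ),
        Complex.exp (-(a:ℂ) * (x:ℂ)^2 - b * (x:ℂ)) * Lam ((Real.sqrt a : ℂ) * (x:ℂ) + c))
      = ∫ x in Set.Ioi (0:ℝ), g x := by rfl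
    _ = -(Lam c - Lam β) / (2*s*(c-β)) := hgval
    _ = -(1 / (2 * s)) * ((Lam c - Lam β) / (c - β)) := by
        field_simp
end

section
/- For t > 0, x ∈ ℝ \ {0}, z ∈ ℂ, ω ∈ ℝ, the function G₁(t,x,z) = Λ((|x|+z)/(2√(it)) + ω√(it)) e^{-(|x|+z)²/(4it)} satisfies the free Schrödinger equation i ∂_t G₁ = -∂²_x G₁, using Λ'(w) = 2wΛ(w) - 2/√π. -/
open MeasureTheory intervalIntegral Set Filter Topology

/-- `√(it) = e^{iπ/4}√t` for `t > 0`. -/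
noncomputable def sqit (t : ℝ) : ℂ :=
  Complex.exp (Real.pi / 4 * Complex.I) * (Real.sqrt t : ℂ)

/-- `√(iπt) = e^{iπ/4}√(πt)` for `t > 0`. -/
noncomputable def sqipt (t : ℝ) : ℂ :=
  Complex.exp (Real.pi / 4 * Complex.I) * (Real.sqrt (Real.pi * t) : ℂ)

/-- The free Schrödinger kernel. -/
noncomputable def Gfree (t x : ℝ) (z : ℂ) : ℂ :=
  (2 * sqipt t)⁻¹ * Complex.exp (-((x : ℂ) - z)^2 / (4 * Complex.I * (t : ℂ)))

/-- The kernel `G₀`. -/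
noncomputable def G0 (t x : ℝ) (z : ℂ) : ℂ :=
  (2 * sqipt t)⁻¹ * Complex.exp (-(((|x| : ℝ) : ℂ) + z)^2 / (4 * Complex.I * (t : ℂ)))

/-- The kernel `G₁` with parameter `ω`. -/
noncomputable def G1 (ω : ℝ) (t x : ℝ) (z : ℂ) : ℂ :=
  Lam ((((|x| : ℝ) : ℂ) + z) / (2 * sqit t) + (ω : ℂ) * sqit t) *
    Complex.exp (-(((|x| : ℝ) : ℂ) + z)^2 / (4 * Complex.I * (t : ℂ)))
lemma sqit_sq {t : ℝ} (ht : 0 ≤ t) : sqit t ^ 2 = Complex.I * t := by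
  rw [sqit, mul_pow, ← Complex.ofReal_pow, Real.sq_sqrt ht, ← Complex.exp_nat_mul]
  congr 1
  have h : ((2:ℕ):ℂ) * (↑Real.pi / 4 * Complex.I) = ↑(Real.pi/2) * Complex.I := by
    push_cast; ring
  rw [h, Complex.exp_mul_I, ← Complex.ofReal_cos, ← Complex.ofReal_sin,
    Real.cos_pi_div_two, Real.sin_pi_div_two]
  simp

lemma sqit_ne {t : ℝ} (ht : 0 < t) : sqit t ≠ 0 := by
  rw [sqit]
  exact mul_ne_zero (Complex.exp_ne_zero _)
    (Complex.ofReal_ne_zero.mpr (ne_of_gt (Real.sqrt_pos.mpr ht)))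

lemma hasDerivAt_sqit {t : ℝ} (ht : 0 < t) : HasDerivAt sqit (sqit t / (2*t)) t := by
  have h := ((Real.hasDerivAt_sqrt ht.ne').ofReal_comp).const_mul
    (Complex.exp (Real.pi / 4 * Complex.I))
  have hfun : sqit = fun y : ℝ => Complex.exp (Real.pi / 4 * Complex.I) * ((Real.sqrt y : ℝ) : ℂ) := rfl
  rw [hfun]
  refine h.congr_deriv ?_
  simp only [sqit]
  have hsne : ((Real.sqrt t : ℝ):ℂ) ≠ 0 := Complex.ofReal_ne_zero.mpr (ne_of_gt (Real.sqrt_pos.mpr ht))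
  have htne : ((t:ℝ):ℂ) ≠ 0 := Complex.ofReal_ne_zero.mpr ht.ne'
  have hs : ((Real.sqrt t : ℝ) : ℂ) * ((Real.sqrt t : ℝ) : ℂ) = (t:ℂ) := by
    rw [← Complex.ofReal_mul, Real.mul_self_sqrt ht.le]
  push_cast
  field_simp
  have hexp : Complex.exp (↑Real.pi * Complex.I / 4) = Complex.exp (↑Real.pi / 4 * Complex.I) := by ring_nf
  linear_combination -hs

lemma scalar_id (Φ E σ tc s k ω : ℂ) (hσ : σ ≠ 0) (htne : tc ≠ 0)
    (hσ2 : σ^2 = Complex.I * tc) :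
    Complex.I * (Complex.I*ω^2*Φ - k*E*((ω*σ - s*(2*σ)⁻¹)/(2*tc)))
      = -(ω*(ω*Φ - (2*σ)⁻¹*k*E) - (2*σ)⁻¹*k*(-s/(2*Complex.I*tc)*E)) := by
  have hinv : (2*σ)⁻¹ = σ/(2*Complex.I*tc) := by
    rw [show (2:ℂ)*Complex.I*tc = 2*σ^2 by rw [hσ2]; ring]
    rw [eq_div_iff (by simpa [pow_two] using mul_ne_zero (mul_ne_zero two_ne_zero hσ) hσ)]
    field_simp
  rw [hinv]
  have hD : (2*Complex.I*tc*(2*Complex.I*tc*(2*Complex.I*tc)) : ℂ) ≠ 0 := by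
    have h2 : (2:ℂ)*Complex.I*tc ≠ 0 :=
      mul_ne_zero (mul_ne_zero two_ne_zero Complex.I_ne_zero) htne
    exact mul_ne_zero h2 (mul_ne_zero h2 h2)
  field_simp [Complex.I_ne_zero]
  linear_combination (4*ω^2*Φ*tc^2*Complex.I^2 - 2*k*E*σ*ω*tc*Complex.I + k*E*σ*s) * Complex.I_sq

noncomputable def Phi (ω t : ℝ) (z : ℂ) (u : ℝ) : ℂ :=
  Complex.exp (↑ω*(↑u+z) + Complex.I*↑ω^2*↑t) *
    (1 - cerf (((u:ℂ)+z)/(2*sqit t) + ↑ω*sqit t))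

noncomputable def Ee (t : ℝ) (z : ℂ) (u : ℝ) : ℂ :=
  Complex.exp (-((u:ℂ)+z)^2/(4*Complex.I*↑t))

noncomputable def Psi (ω t : ℝ) (z : ℂ) (u : ℝ) : ℂ :=
  ↑ω * Phi ω t z u - (2*sqit t)⁻¹ * (2/(Real.sqrt Real.pi : ℂ)) * Ee t z u

lemma exp_id (ω : ℝ) {t : ℝ} (ht : 0 < t) (z : ℂ) (u : ℝ) :
    Complex.exp (↑ω*(↑u+z) + Complex.I*↑ω^2*↑t) *
      Complex.exp (-(((u:ℂ)+z)/(2*sqit t) + ↑ω*sqit t)^2) = Ee t z u := by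
  rw [Ee, ← Complex.exp_add]
  congr 1
  have hσ := sqit_ne ht
  have hσ2 := sqit_sq ht.le
  have htne : (t:ℂ) ≠ 0 := Complex.ofReal_ne_zero.mpr ht.ne'
  have key : (((u:ℂ)+z)/(2*sqit t) + ↑ω*sqit t)^2
      = ((u:ℂ)+z)^2/(4*sqit t^2) + ↑ω*((u:ℂ)+z) + ↑ω^2*sqit t^2 := by
    field_simp
    ring
  rw [key, hσ2]
  field_simp [Complex.I_ne_zero]
  ring


lemma G1_eq (ω : ℝ) {t : ℝ} (ht : 0 < t) (x : ℝ) (z : ℂ) :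
    G1 ω t x z = Phi ω t z |x| := by
  rw [G1, Lam, Phi]
  rw [show Complex.exp (-(((|x| : ℝ) : ℂ)+z)^2/(4*Complex.I*(t:ℂ))) = Ee t z |x| from rfl,
    ← exp_id ω ht z |x|]
  have h1 : Complex.exp (((((|x| : ℝ) : ℂ)+z)/(2*sqit t) + (ω:ℂ)*sqit t)^2) *
      Complex.exp (-((((|x| : ℝ) : ℂ)+z)/(2*sqit t) + (ω:ℂ)*sqit t)^2) = 1 := by
    rw [← Complex.exp_add]; simp
  linear_combination Complex.exp ((ω:ℂ)*(((|x| : ℝ) : ℂ)+z) + Complex.I*(ω:ℂ)^2*(t:ℂ)) *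
    (1 - cerf ((((|x| : ℝ) : ℂ)+z)/(2*sqit t) + (ω:ℂ)*sqit t)) * h1

lemma hasDerivAt_Ee {t : ℝ} (ht : 0 < t) (z : ℂ) (u : ℝ) :
    HasDerivAt (fun v : ℝ => Ee t z v) (-((u:ℂ)+z)/(2*Complex.I*↑t) * Ee t z u) u := by
  have htne : (t:ℂ) ≠ 0 := Complex.ofReal_ne_zero.mpr ht.ne'
  have h0 : HasDerivAt (fun s : ℝ => ((s:ℂ))) 1 u := by
    simpa using (hasDerivAt_id u).ofReal_comp
  have hin : HasDerivAt (fun v : ℝ => -((v:ℂ)+z)^2/(4*Complex.I*↑t))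
      (-(((u:ℂ)+z)+((u:ℂ)+z))/(4*Complex.I*↑t)) u := by
    have hfun : (fun v : ℝ => -((v:ℂ)+z)^2/(4*Complex.I*↑t))
        = (fun v : ℝ => -(((v:ℂ)+z)*((v:ℂ)+z))/(4*Complex.I*↑t)) := by
      funext v; ring
    rw [hfun]
    have := (((h0.add_const z).mul (h0.add_const z)).neg).div_const (4*Complex.I*↑t)
    refine this.congr_deriv ?_
    ring
  have := hin.cexp
  refine this.congr_deriv ?_
  rw [show Complex.exp (-((u:ℂ)+z)^2/(4*Complex.I*↑t)) = Ee t z u from rfl]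
  field_simp [Complex.I_ne_zero]
  ring

lemma hasDerivAt_Phi (ω : ℝ) {t : ℝ} (ht : 0 < t) (z : ℂ) (u : ℝ) :
    HasDerivAt (fun v : ℝ => Phi ω t z v) (Psi ω t z u) u := by
  have hσ := sqit_ne ht
  have h0 : HasDerivAt (fun s : ℝ => ((s:ℂ))) 1 u := by
    simpa using (hasDerivAt_id u).ofReal_comp
  have hA : HasDerivAt (fun v : ℝ => Complex.exp ((ω:ℂ)*((v:ℂ)+z) + Complex.I*(ω:ℂ)^2*(t:ℂ)))
      ((ω:ℂ) * Complex.exp ((ω:ℂ)*((u:ℂ)+z) + Complex.I*(ω:ℂ)^2*(t:ℂ))) u := by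
    have h1 := (((h0.add_const z).const_mul (ω:ℂ)).add_const (Complex.I*(ω:ℂ)^2*(t:ℂ))).cexp
    convert h1 using 1
    ring
  have hw : HasDerivAt (fun v : ℝ => ((v:ℂ)+z)/(2*sqit t) + (ω:ℂ)*sqit t) ((2*sqit t)⁻¹) u := by
    have h1 := ((h0.add_const z).div_const (2*sqit t)).add_const ((ω:ℂ)*sqit t)
    refine h1.congr_deriv ?_
    rw [one_div]
  have hC : HasDerivAt (fun v : ℝ => 1 - cerf (((v:ℂ)+z)/(2*sqit t) + (ω:ℂ)*sqit t))
      (-((2*sqit t)⁻¹ * ((2/(Real.sqrt Real.pi : ℂ)) *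
        Complex.exp (-(((u:ℂ)+z)/(2*sqit t) + (ω:ℂ)*sqit t)^2)))) u := by
    have h1 := (hasDerivAt_cerf (((u:ℂ)+z)/(2*sqit t) + (ω:ℂ)*sqit t)).scomp u hw
    have h2 := h1.const_sub 1
    refine h2.congr_deriv ?_
    rfl
  have hP := hA.mul hC
  have : Psi ω t z u = (ω:ℂ) * Complex.exp ((ω:ℂ)*((u:ℂ)+z) + Complex.I*(ω:ℂ)^2*(t:ℂ)) *
      (1 - cerf (((u:ℂ)+z)/(2*sqit t) + (ω:ℂ)*sqit t)) +
      Complex.exp ((ω:ℂ)*((u:ℂ)+z) + Complex.I*(ω:ℂ)^2*(t:ℂ)) *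
      (-((2*sqit t)⁻¹ * ((2/(Real.sqrt Real.pi : ℂ)) *
        Complex.exp (-(((u:ℂ)+z)/(2*sqit t) + (ω:ℂ)*sqit t)^2)))) := by
    rw [Psi, Phi, ← exp_id ω ht z u]
    ring
  rw [show (fun v : ℝ => Phi ω t z v) = (fun v : ℝ =>
    Complex.exp ((ω:ℂ)*((v:ℂ)+z) + Complex.I*(ω:ℂ)^2*(t:ℂ)) *
      (1 - cerf (((v:ℂ)+z)/(2*sqit t) + (ω:ℂ)*sqit t))) from rfl, this]
  exact hP

lemma hasDerivAt_Psi (ω : ℝ) {t : ℝ} (ht : 0 < t) (z : ℂ) (u : ℝ) :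
    HasDerivAt (fun v : ℝ => Psi ω t z v)
      ((ω:ℂ) * Psi ω t z u - (2*sqit t)⁻¹ * (2/(Real.sqrt Real.pi : ℂ)) *
        (-((u:ℂ)+z)/(2*Complex.I*↑t) * Ee t z u)) u := by
  have h1 := (hasDerivAt_Phi ω ht z u).const_mul (ω:ℂ)
  have h2 := (hasDerivAt_Ee ht z u).const_mul ((2*sqit t)⁻¹ * (2/(Real.sqrt Real.pi : ℂ)))
  have h3 := h1.sub h2
  exact h3

lemma hasDerivAt_time (ω : ℝ) {t : ℝ} (ht : 0 < t) (z : ℂ) (u : ℝ) :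
    HasDerivAt (fun τ : ℝ => Phi ω τ z u)
      (Complex.I*(ω:ℂ)^2 * Phi ω t z u
        - (2/(Real.sqrt Real.pi : ℂ)) * Ee t z u *
          (((ω:ℂ)*sqit t - ((u:ℂ)+z)*(2*sqit t)⁻¹)/(2*(t:ℂ)))) t := by
  have hσ := sqit_ne ht
  have htne : (t:ℂ) ≠ 0 := Complex.ofReal_ne_zero.mpr ht.ne'
  have h0 : HasDerivAt (fun s : ℝ => ((s:ℂ))) 1 t := by
    simpa using (hasDerivAt_id t).ofReal_comp
  have hA : HasDerivAt (fun τ : ℝ => Complex.exp ((ω:ℂ)*((u:ℂ)+z) + Complex.I*(ω:ℂ)^2*(τ:ℂ)))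
      (Complex.I*(ω:ℂ)^2 * Complex.exp ((ω:ℂ)*((u:ℂ)+z) + Complex.I*(ω:ℂ)^2*(t:ℂ))) t := by
    have h1 := ((h0.const_mul (Complex.I*(ω:ℂ)^2)).const_add ((ω:ℂ)*((u:ℂ)+z))).cexp
    convert h1 using 1
    ring
  have hw : HasDerivAt (fun τ : ℝ => ((u:ℂ)+z)/(2*sqit τ) + (ω:ℂ)*sqit τ)
      (((ω:ℂ)*sqit t - ((u:ℂ)+z)*(2*sqit t)⁻¹)/(2*(t:ℂ))) t := by
    have hd : HasDerivAt (fun τ : ℝ => 2*sqit τ) (2*(sqit t/(2*(t:ℂ)))) t :=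
      (hasDerivAt_sqit ht).const_mul 2
    have hne : 2*sqit t ≠ 0 := by
      exact mul_ne_zero two_ne_zero hσ
    have h1 := (hasDerivAt_const t ((u:ℂ)+z)).div hd hne
    have h2 := (hasDerivAt_sqit ht).const_mul (ω:ℂ)
    have h3 := h1.add h2
    refine h3.congr_deriv ?_
    field_simp
    ring
  have hC : HasDerivAt (fun τ : ℝ => 1 - cerf (((u:ℂ)+z)/(2*sqit τ) + (ω:ℂ)*sqit τ))
      (-((((ω:ℂ)*sqit t - ((u:ℂ)+z)*(2*sqit t)⁻¹)/(2*(t:ℂ))) * ((2/(Real.sqrt Real.pi : ℂ)) *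
        Complex.exp (-(((u:ℂ)+z)/(2*sqit t) + (ω:ℂ)*sqit t)^2)))) t := by
    have h1 := (hasDerivAt_cerf (((u:ℂ)+z)/(2*sqit t) + (ω:ℂ)*sqit t)).scomp t hw
    have h2 := h1.const_sub 1
    refine h2.congr_deriv ?_
    rfl
  have hP := hA.mul hC
  have heq : Complex.I*(ω:ℂ)^2 * Phi ω t z u
        - (2/(Real.sqrt Real.pi : ℂ)) * Ee t z u *
          (((ω:ℂ)*sqit t - ((u:ℂ)+z)*(2*sqit t)⁻¹)/(2*(t:ℂ)))
      = Complex.I*(ω:ℂ)^2 * Complex.exp ((ω:ℂ)*((u:ℂ)+z) + Complex.I*(ω:ℂ)^2*(t:ℂ)) *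
        (1 - cerf (((u:ℂ)+z)/(2*sqit t) + (ω:ℂ)*sqit t)) +
        Complex.exp ((ω:ℂ)*((u:ℂ)+z) + Complex.I*(ω:ℂ)^2*(t:ℂ)) *
        (-((((ω:ℂ)*sqit t - ((u:ℂ)+z)*(2*sqit t)⁻¹)/(2*(t:ℂ))) * ((2/(Real.sqrt Real.pi : ℂ)) *
          Complex.exp (-(((u:ℂ)+z)/(2*sqit t) + (ω:ℂ)*sqit t)^2)))) := by
    rw [Phi, ← exp_id ω ht z u]
    ring
  rw [show (fun τ : ℝ => Phi ω τ z u) = (fun τ : ℝ =>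
    Complex.exp ((ω:ℂ)*((u:ℂ)+z) + Complex.I*(ω:ℂ)^2*(τ:ℂ)) *
      (1 - cerf (((u:ℂ)+z)/(2*sqit τ) + (ω:ℂ)*sqit τ))) from rfl, heq]
  exact hP

theorem G1_schrodinger (ω t x : ℝ) (ht : 0 < t) (hx : x ≠ 0) (z : ℂ) :
    Complex.I * deriv (fun τ : ℝ => G1 ω τ x z) t =
      -deriv (fun ξ : ℝ => deriv (fun ξ' : ℝ => G1 ω t ξ' z) ξ) x := by
  have hσ := sqit_ne ht
  have hσ2 := sqit_sq ht.le
  have htne : (t:ℂ) ≠ 0 := Complex.ofReal_ne_zero.mpr ht.ne'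
  have hπ : ((Real.sqrt Real.pi : ℝ) : ℂ) ≠ 0 :=
    Complex.ofReal_ne_zero.mpr (ne_of_gt (Real.sqrt_pos.mpr Real.pi_pos))
  have hev : (fun τ : ℝ => G1 ω τ x z) =ᶠ[𝓝 t] (fun τ : ℝ => Phi ω τ z |x|) := by
    filter_upwards [Ioi_mem_nhds ht] with τ hτ
    exact G1_eq ω hτ x z
  have hL := (hasDerivAt_time ω ht z |x|).congr_of_eventuallyEq hev
  rw [hL.deriv]
  set ε : ℝ := if 0 < x then 1 else -1 with hεdef
  have hε2 : ε * ε = 1 := by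
    rw [hεdef]; split <;> norm_num
  set S : Set ℝ := if 0 < x then Ioi (0:ℝ) else Iio (0:ℝ) with hSdef
  have hSopen : IsOpen S := by
    rw [hSdef]; split; exacts [isOpen_Ioi, isOpen_Iio]
  have hxS : x ∈ S := by
    rw [hSdef]; split
    · assumption
    · exact lt_of_le_of_ne (not_lt.mp (by assumption)) hx
  have habs : ∀ ξ ∈ S, |ξ| = ε * ξ := by
    intro ξ hξ
    rw [hSdef] at hξ; rw [hεdef]
    by_cases h : 0 < x
    · rw [if_pos h] at hξ ⊢; rw [abs_of_pos hξ]; ring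
    · rw [if_neg h] at hξ ⊢; rw [abs_of_neg hξ]; ring
  have hlin : ∀ ξ : ℝ, HasDerivAt (fun ξ' : ℝ => ε * ξ') ε ξ := fun ξ => by
    simpa using (hasDerivAt_id ξ).const_mul ε
  have hinner : ∀ ξ ∈ S, deriv (fun ξ' : ℝ => G1 ω t ξ' z) ξ = ε • Psi ω t z (ε*ξ) := by
    intro ξ hξ
    have hd : HasDerivAt (fun ξ' : ℝ => Phi ω t z (ε*ξ')) (ε • Psi ω t z (ε*ξ)) ξ :=
      (hasDerivAt_Phi ω ht z (ε*ξ)).scomp ξ (hlin ξ)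
    have hev2 : (fun ξ' : ℝ => G1 ω t ξ' z) =ᶠ[𝓝 ξ] (fun ξ' : ℝ => Phi ω t z (ε*ξ')) := by
      filter_upwards [hSopen.mem_nhds hξ] with ξ' hξ'
      rw [G1_eq ω ht ξ' z, habs ξ' hξ']
    exact (hd.congr_of_eventuallyEq hev2).deriv
  have houter : deriv (fun ξ : ℝ => deriv (fun ξ' : ℝ => G1 ω t ξ' z) ξ) x
      = deriv (fun ξ : ℝ => ε • Psi ω t z (ε*ξ)) x := by
    apply Filter.EventuallyEq.deriv_eq
    filter_upwards [hSopen.mem_nhds hxS] with ξ hξ using hinner ξ hξ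
  rw [houter]
  have hdd : HasDerivAt (fun ξ : ℝ => ε • Psi ω t z (ε*ξ))
      (ε • (ε • ((ω:ℂ) * Psi ω t z (ε*x) - (2*sqit t)⁻¹ * (2/(Real.sqrt Real.pi : ℂ)) *
        (-((((ε*x : ℝ)):ℂ)+z)/(2*Complex.I*(t:ℂ)) * Ee t z (ε*x))))) x := by
    exact ((hasDerivAt_Psi ω ht z (ε*x)).scomp x (hlin x)).const_smul ε
  rw [hdd.deriv, smul_smul, hε2, one_smul]
  rw [show ε * x = |x| from (habs x hxS).symm, Psi]
  exact scalar_id (Phi ω t z |x|) (Ee t z |x|) (sqit t) (t:ℂ) (((|x| : ℝ) : ℂ)+z)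
    (2/(Real.sqrt Real.pi : ℂ)) (ω:ℂ) hσ htne hσ2
end

section
/- Let F be holomorphic on an open set containing the sector S_α (0 < α < π/2) with |F(z)| ≤ A e^{B Im(z)} on S_α for some A, B ≥ 0. Then for each t > 0 and x ∈ ℝ \ {0} the improper Riemann integral Ψ₀(t,x) = lim_{R→∞} ∫₀^R G₀(t,x,y) F(y) dy exists and equals the absolutely convergent integral e^{iα} ∫₀^∞ G₀(t,x,ye^{iα}) F(ye^{iα}) dy, where G₀(t,x,z) = (1/(2√(iπt))) e^{-(|x|+z)²/(4it)}. -/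
open MeasureTheory intervalIntegral Set Filter Topology Interval

/-- The sector `S_α = {z : z = 0 ∨ 0 ≤ Arg z ≤ α}`. -/
def sector (α : ℝ) : Set ℂ := {z : ℂ | z = 0 ∨ (0 ≤ z.arg ∧ z.arg ≤ α)}
lemma ray_re (y θ : ℝ) : ((y:ℂ) * Complex.exp (θ * Complex.I)).re = y * Real.cos θ := by
  simp [Complex.exp_mul_I, Complex.mul_re, ← Complex.ofReal_cos, ← Complex.ofReal_sin]

lemma ray_im (y θ : ℝ) : ((y:ℂ) * Complex.exp (θ * Complex.I)).im = y * Real.sin θ := by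
  simp [Complex.exp_mul_I, Complex.mul_im, ← Complex.ofReal_cos, ← Complex.ofReal_sin]

lemma ray_abs (y θ : ℝ) (hy : 0 ≤ y) : ‖(y:ℂ) * Complex.exp (θ * Complex.I)‖ = y := by
  simp [norm_mul, Complex.norm_exp, abs_of_nonneg hy]

lemma mem_sector {α θ : ℝ} (hθ0 : 0 ≤ θ) (hθα : θ ≤ α) (hαπ : α ≤ Real.pi) {y : ℝ} (hy : 0 ≤ y) :
    (y:ℂ) * Complex.exp (θ * Complex.I) ∈ sector α := by
  rcases eq_or_lt_of_le hy with h|h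
  · left; simp [← h]
  · right
    have : ((y:ℂ) * Complex.exp (θ * Complex.I)).arg = θ := by
      rw [Complex.exp_mul_I, Complex.arg_real_mul _ h, Complex.arg_cos_add_sin_mul_I
          ⟨lt_of_lt_of_le (neg_neg_of_pos Real.pi_pos) hθ0, hθα.trans hαπ⟩]
    rw [this]; exact ⟨hθ0, hθα⟩

lemma real_mem_sector {α : ℝ} (hα : 0 ≤ α) (hαπ : α ≤ Real.pi) {y : ℝ} (hy : 0 ≤ y) :
    (y:ℂ) ∈ sector α := by
  have := mem_sector (le_refl 0) hα hαπ hy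
  simpa using this

lemma sector_im_nonneg {α : ℝ} {z : ℂ} (hz : z ∈ sector α) : 0 ≤ z.im := by
  rcases hz with h | ⟨h1, _⟩
  · simp [h]
  · exact Complex.arg_nonneg_iff.mp h1

lemma sector_re_nonneg {α : ℝ} (hα : α ≤ Real.pi/2) {z : ℂ} (hz : z ∈ sector α) : 0 ≤ z.re := by
  rcases hz with h | ⟨h1, h2⟩
  · simp [h]
  · exact Complex.abs_arg_le_pi_div_two_iff.mp (abs_le.mpr ⟨by linarith [Real.pi_pos], h2.trans hα⟩)

-- the rectangle/contour identity
lemma rect_id {α : ℝ} (hα : α ∈ Set.Ioo 0 (Real.pi / 2))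
    {Ω : Set ℂ} (hΩ : IsOpen Ω) (hsub : sector α ⊆ Ω)
    {f : ℂ → ℂ} (hf : DifferentiableOn ℂ f Ω)
    {δ R : ℝ} (hδ : 0 < δ) (hR : 0 < R) :
    ∫ y in δ..R, f y = Complex.exp (α * Complex.I) *
        (∫ y in δ..R, f ((y:ℂ) * Complex.exp (α * Complex.I)))
      - Complex.I • (∫ θ in (0:ℝ)..α, f ((R:ℂ) * Complex.exp (θ * Complex.I)) *
          ((R:ℂ) * Complex.exp (θ * Complex.I)))
      + Complex.I • (∫ θ in (0:ℝ)..α, f ((δ:ℂ) * Complex.exp (θ * Complex.I)) *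
          ((δ:ℂ) * Complex.exp (θ * Complex.I))) := by
  obtain ⟨hα0, hα2⟩ := hα
  have hαπ : α ≤ Real.pi := by linarith [Real.pi_pos]
  set Lδ := Real.log δ with hLδ
  set LR := Real.log R with hLR
  have hmaps : MapsTo Complex.exp ([[Lδ, LR]] ×ℂ [[(0:ℝ), α]]) Ω := by
    intro w hw
    apply hsub
    have hw2 : w.im ∈ [[(0:ℝ), α]] := hw.2
    rw [uIcc_of_le hα0.le] at hw2
    have : Complex.exp w = ((Real.exp w.re : ℝ) : ℂ) * Complex.exp ((w.im : ℂ) * Complex.I) := by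
      rw [Complex.ofReal_exp, ← Complex.exp_add]
      congr 1
      exact (Complex.re_add_im w).symm
    rw [this]
    exact mem_sector hw2.1 hw2.2 hαπ (Real.exp_nonneg _)
  have hdiff : DifferentiableOn ℂ (fun w => f (Complex.exp w) * Complex.exp w)
      ([[Lδ, LR]] ×ℂ [[(0:ℝ), α]]) :=
    ((hf.comp Complex.differentiable_exp.differentiableOn hmaps).mul
      Complex.differentiable_exp.differentiableOn)
  have key := Complex.integral_boundary_rect_eq_zero_of_differentiableOn
    (fun w => f (Complex.exp w) * Complex.exp w) (Lδ : ℂ) ((LR : ℂ) + (α : ℂ) * Complex.I) (by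
      simpa using hdiff)
  simp only [Complex.add_re, Complex.add_im, Complex.ofReal_re, Complex.ofReal_im,
    Complex.mul_re, Complex.mul_im, Complex.I_re, Complex.I_im, mul_zero, mul_one,
    zero_mul, sub_zero, add_zero, zero_add, Complex.ofReal_zero] at key
  have hexp_edge : ∀ r : ℝ, 0 < r → ∀ θ : ℝ, Complex.exp ((Real.log r : ℂ) + (θ:ℂ) * Complex.I)
      = (r:ℂ) * Complex.exp ((θ:ℂ) * Complex.I) := by
    intro r hr θ
    rw [Complex.exp_add, ← Complex.ofReal_exp, Real.exp_log hr]
  have hcontf : ContinuousOn f Ω := hf.continuousOn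
  have h1 : ∀ x ∈ uIcc Lδ LR, HasDerivAt Real.exp (Real.exp x) x := fun x _ => Real.hasDerivAt_exp x
  have h2 : ContinuousOn Real.exp (uIcc Lδ LR) := Real.continuous_exp.continuousOn
  have hsub1 : (∫ x in Lδ..LR, f (Complex.exp ↑x) * Complex.exp ↑x) = ∫ y in δ..R, f ↑y := by
    have h3 : ContinuousOn (fun y : ℝ => f ↑y) (Real.exp '' uIcc Lδ LR) := by
      apply (hcontf.mono hsub).comp Complex.continuous_ofReal.continuousOn
      intro y hy
      obtain ⟨s, _, rfl⟩ := hy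
      exact real_mem_sector hα0.le hαπ (Real.exp_nonneg s)
    have h4 := integral_comp_smul_deriv' h1 h2 h3
    rw [Real.exp_log hδ, Real.exp_log hR] at h4
    rw [← h4]
    apply intervalIntegral.integral_congr
    intro x _
    simp [Function.comp, Complex.real_smul, ← Complex.ofReal_exp, mul_comm]
  have hsub2 : (∫ x in Lδ..LR, f (Complex.exp (↑x + ↑α * Complex.I)) *
        Complex.exp (↑x + ↑α * Complex.I))
      = Complex.exp (↑α * Complex.I) * ∫ y in δ..R, f ((y:ℂ) * Complex.exp (↑α * Complex.I)) := by
    have h3 : ContinuousOn (fun y : ℝ => Complex.exp ((α:ℂ) * Complex.I) •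
        f ((y:ℂ) * Complex.exp ((α:ℂ) * Complex.I))) (Real.exp '' uIcc Lδ LR) := by
      refine (continuousOn_const (c := Complex.exp ((α:ℂ) * Complex.I))).smul ((hcontf.mono hsub).comp
        ((Complex.continuous_ofReal.mul continuous_const).continuousOn) ?_)
      intro y hy
      obtain ⟨s, _, rfl⟩ := hy
      exact mem_sector hα0.le (le_refl α) hαπ (Real.exp_nonneg s)
    have h4 := integral_comp_smul_deriv' h1 h2 h3
    rw [Real.exp_log hδ, Real.exp_log hR] at h4
    rw [intervalIntegral.integral_smul] at h4
    have h5 : (∫ x in Lδ..LR, f (Complex.exp (↑x + ↑α * Complex.I)) *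
          Complex.exp (↑x + ↑α * Complex.I))
        = ∫ x in Lδ..LR, Real.exp x • ((fun y : ℝ => Complex.exp ((α:ℂ) * Complex.I) •
            f ((y:ℂ) * Complex.exp ((α:ℂ) * Complex.I))) ∘ Real.exp) x := by
      apply intervalIntegral.integral_congr
      intro x _
      simp only [Function.comp, Complex.exp_add, ← Complex.ofReal_exp, Complex.real_smul,
        smul_eq_mul]
      ring
    rw [h5, h4, smul_eq_mul]
  rw [hsub1, hsub2] at key
  simp only [hLR, hLδ, hexp_edge R hR, hexp_edge δ hδ] at key
  simp only [smul_eq_mul] at key ⊢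
  linear_combination key

lemma integral_exp_neg_mul' (m A' : ℝ) (hm : 0 < m) :
    ∫ θ in (0:ℝ)..A', Real.exp (-(m*θ)) = (1 - Real.exp (-(m*A')))/m := by
  have hderiv : ∀ u ∈ uIcc (0:ℝ) A',
      HasDerivAt (fun u => -Real.exp (-(m*u))/m) (Real.exp (-(m*u))) u := by
    intro u _
    have h1 : HasDerivAt (fun u : ℝ => -(m*u)) (-m) u := by
      simpa using ((hasDerivAt_id u).const_mul (-m))
    have h2 := (Real.hasDerivAt_exp (-(m*u))).comp u h1
    have h3 := (h2.div_const m).neg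
    convert h3 using 1
    · ext u; simp [Function.comp, neg_div]
    · ext u; simp [Function.comp, neg_div]
    · ext u; simp [Function.comp, neg_div]
    · rw [mul_neg, neg_div, neg_neg, mul_div_assoc, div_self hm.ne', mul_one]
  rw [intervalIntegral.integral_eq_sub_of_hasDerivAt hderiv
    ((Real.continuous_exp.comp ((continuous_const.mul continuous_id).neg)).intervalIntegrable 0 A')]
  rw [mul_zero, neg_zero, Real.exp_zero]
  ring

set_option maxHeartbeats 1000000 in
lemma sector_fresnel {α : ℝ} (hα : α ∈ Set.Ioo 0 (Real.pi / 2))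
    {Ω : Set ℂ} (hΩ : IsOpen Ω) (hsub : sector α ⊆ Ω)
    {f : ℂ → ℂ} (hf : DifferentiableOn ℂ f Ω)
    {C a b : ℝ} (hC : 0 ≤ C) (ha : 0 < a) (hb : 0 ≤ b)
    (hbd : ∀ z ∈ sector α, ‖f z‖ ≤
      C * Real.exp (-(2*a) * (z.re * z.im) + b * z.im)) :
    IntegrableOn (fun y : ℝ => f ((y:ℂ) * Complex.exp (α * Complex.I))) (Set.Ioi 0) ∧
    Tendsto (fun R : ℝ => ∫ y in (0:ℝ)..R, f y) atTop
      (𝓝 (Complex.exp (α * Complex.I) *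
        ∫ y in Set.Ioi (0:ℝ), f ((y:ℂ) * Complex.exp (α * Complex.I)))) := by
  obtain ⟨hα0, hα2⟩ := hα
  have hπ := Real.pi_pos
  have hαπ : α ≤ Real.pi := by linarith
  have hcos : 0 < Real.cos α := Real.cos_pos_of_mem_Ioo ⟨by linarith, hα2⟩
  have hsin : 0 < Real.sin α := Real.sin_pos_of_pos_of_lt_pi hα0 (by linarith)
  set g : ℝ → ℂ := fun y => f ((y:ℂ) * Complex.exp (α * Complex.I)) with hgdef
  have hcont : ContinuousOn f Ω := hf.continuousOn
  have hcont_ray : ContinuousOn g (Ici 0) := by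
    refine (hcont.mono hsub).comp
      ((Complex.continuous_ofReal.mul continuous_const).continuousOn) ?_
    intro y hy
    exact mem_sector hα0.le le_rfl hαπ hy
  set c1 := 2*a*(Real.cos α * Real.sin α) with hc1
  have hc1pos : 0 < c1 := by positivity
  set c2 := b * Real.sin α with hc2
  have hray_bd : ∀ y : ℝ, 0 ≤ y → ‖g y‖ ≤ C * Real.exp (-c1*y^2 + c2*y) := by
    intro y hy
    have h := hbd _ (mem_sector hα0.le le_rfl hαπ hy)
    rw [ray_re, ray_im] at h
    have he : -(2*a) * (y*Real.cos α * (y*Real.sin α)) + b*(y*Real.sin α)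
        = -c1*y^2 + c2*y := by rw [hc1, hc2]; ring
    rw [he] at h
    exact h
  -- integrability on the rotated ray
  have hint : IntegrableOn g (Ioi 0) := by
    have hmeas : AEStronglyMeasurable g (volume.restrict (Ioi 0)) :=
      (hcont_ray.mono Ioi_subset_Ici_self).aestronglyMeasurable measurableSet_Ioi
    set K := C * Real.exp (c2^2/(4*c1)) with hK
    have hKint : Integrable (fun y : ℝ => K * Real.exp (-c1*(y - c2/(2*c1))^2)) :=
      ((integrable_exp_neg_mul_sq hc1pos).comp_sub_right (c2/(2*c1))).const_mul K
    refine (hKint.integrableOn.mono' hmeas ?_)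
    filter_upwards [ae_restrict_mem measurableSet_Ioi] with y hy
    have h := hray_bd y (le_of_lt hy)
    have hexp : -c1*y^2 + c2*y = c2^2/(4*c1) + (-c1*(y - c2/(2*c1))^2) := by
      field_simp
      ring
    have he : C * Real.exp (-c1*y^2 + c2*y) = K * Real.exp (-c1*(y - c2/(2*c1))^2) := by
      rw [hexp, Real.exp_add, hK]
      ring
    exact h.trans_eq he
  -- the arc integral
  set Arc : ℝ → ℂ := fun r => Complex.I • ∫ θ in (0:ℝ)..α,
      f ((r:ℂ) * Complex.exp ((θ:ℂ) * Complex.I)) * ((r:ℂ) * Complex.exp ((θ:ℂ) * Complex.I))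
    with hArcdef
  have hArc_norm : ∀ r : ℝ, ‖Arc r‖ = ‖∫ θ in (0:ℝ)..α,
      f ((r:ℂ) * Complex.exp ((θ:ℂ) * Complex.I)) *
        ((r:ℂ) * Complex.exp ((θ:ℂ) * Complex.I))‖ := by
    intro r; rw [hArcdef]; simp [norm_smul]
  -- arc tends to 0 as r → 0⁺
  have hArc0 : Tendsto Arc (𝓝[>] (0:ℝ)) (𝓝 0) := by
    apply squeeze_zero_norm' (a := fun r => (C * Real.exp b * α) * r)
    · filter_upwards [Ioc_mem_nhdsGT_of_mem (Set.left_mem_Ico.mpr zero_lt_one)] with r hr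
      rw [hArc_norm]
      have hb2 : ∀ θ ∈ Set.uIoc (0:ℝ) α, ‖f ((r:ℂ) * Complex.exp ((θ:ℂ) * Complex.I)) *
          ((r:ℂ) * Complex.exp ((θ:ℂ) * Complex.I))‖ ≤ C * Real.exp b * r := by
        intro θ hθ
        rw [uIoc_of_le hα0.le] at hθ
        obtain ⟨hθ1, hθ2⟩ := hθ
        have hz := mem_sector hθ1.le hθ2 hαπ hr.1.le
        have h := hbd _ hz
        rw [ray_re, ray_im] at h
        have hsθ : 0 ≤ Real.sin θ := Real.sin_nonneg_of_nonneg_of_le_pi hθ1.le (hθ2.trans hαπ)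
        have hcθ : 0 ≤ Real.cos θ := Real.cos_nonneg_of_mem_Icc ⟨by linarith, by linarith⟩
        have hexp : -(2*a) * (r*Real.cos θ * (r*Real.sin θ)) + b*(r*Real.sin θ) ≤ b := by
          have h1 : 0 ≤ 2*a*(r*Real.cos θ * (r*Real.sin θ)) :=
            mul_nonneg (by positivity)
              (mul_nonneg (mul_nonneg hr.1.le hcθ) (mul_nonneg hr.1.le hsθ))
          have hrs : r * Real.sin θ ≤ 1 := by
            nlinarith [Real.sin_le_one θ, hr.2, hsθ, hr.1.le]
          have h2 : b*(r*Real.sin θ) ≤ b := by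
            nlinarith [mul_nonneg hb (by linarith : (0:ℝ) ≤ 1 - r*Real.sin θ)]
          linarith
        rw [norm_mul, ray_abs _ _ hr.1.le]
        calc ‖f _‖ * r ≤ (C * Real.exp b) * r := by
              apply mul_le_mul_of_nonneg_right _ hr.1.le
              exact h.trans (mul_le_mul_of_nonneg_left (Real.exp_le_exp.mpr hexp) hC)
          _ = C * Real.exp b * r := rfl
      have := intervalIntegral.norm_integral_le_of_norm_le_const hb2
      rw [sub_zero, abs_of_nonneg hα0.le] at this
      calc ‖_‖ ≤ C * Real.exp b * r * α := this
        _ = C * Real.exp b * α * r := by ring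
    · have h7 : Continuous (fun r : ℝ => C * Real.exp b * α * r) :=
        continuous_const.mul continuous_id
      have h8 : Tendsto (fun r : ℝ => C * Real.exp b * α * r) (𝓝 0) (𝓝 0) := by
        simpa using h7.tendsto 0
      exact h8.mono_left nhdsWithin_le_nhds
  -- arc tends to 0 at infinity
  set k := 2*a*Real.cos α/Real.pi with hk
  have hkpos : 0 < k := by positivity
  have hArcInf : Tendsto Arc atTop (𝓝 0) := by
    apply squeeze_zero_norm' (a := fun R => C/k/R)
    · filter_upwards [eventually_ge_atTop (max 1 (b/(a*Real.cos α)))] with R hR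
      have hR1 : (1:ℝ) ≤ R := le_trans (le_max_left _ _) hR
      have hR0 : 0 < R := lt_of_lt_of_le zero_lt_one hR1
      have hRb : b * R ≤ a * Real.cos α * R^2 := by
        have h1 : b / (a*Real.cos α) ≤ R := le_trans (le_max_right _ _) hR
        have h2 : b ≤ R * (a*Real.cos α) := (div_le_iff₀ (by positivity)).mp h1
        nlinarith
      have hcurve : Continuous (fun θ : ℝ => (R:ℂ) * Complex.exp ((θ:ℂ) * Complex.I)) :=
        continuous_const.mul (Complex.continuous_exp.comp
          (Complex.continuous_ofReal.mul continuous_const))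
      have harc_cont : ContinuousOn
          (fun θ : ℝ => f ((R:ℂ) * Complex.exp ((θ:ℂ) * Complex.I)) *
            ((R:ℂ) * Complex.exp ((θ:ℂ) * Complex.I))) (uIcc 0 α) := by
        refine (((hcont.mono hsub).comp hcurve.continuousOn ?_).mul hcurve.continuousOn)
        intro θ hθ
        rw [uIcc_of_le hα0.le] at hθ
        exact mem_sector hθ.1 hθ.2 hαπ hR0.le
      have hbnd : ∀ θ ∈ Set.Icc (0:ℝ) α,
          ‖f ((R:ℂ) * Complex.exp ((θ:ℂ) * Complex.I)) *
            ((R:ℂ) * Complex.exp ((θ:ℂ) * Complex.I))‖ ≤ R * C * Real.exp (-(k*R^2*θ)) := by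
        intro θ hθ
        obtain ⟨hθ1, hθ2⟩ := hθ
        have h := hbd _ (mem_sector hθ1 hθ2 hαπ hR0.le)
        rw [ray_re, ray_im] at h
        have hsθ : 0 ≤ Real.sin θ := Real.sin_nonneg_of_nonneg_of_le_pi hθ1 (hθ2.trans hαπ)
        have hcθ : Real.cos α ≤ Real.cos θ := Real.cos_le_cos_of_nonneg_of_le_pi hθ1 hαπ hθ2
        have hjord : 2/Real.pi*θ ≤ Real.sin θ := Real.mul_le_sin hθ1 (by linarith)
        have hexp : -(2*a) * (R*Real.cos θ * (R*Real.sin θ)) + b*(R*Real.sin θ)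
            ≤ -(k*R^2*θ) := by
          have e1 : b*(R*Real.sin θ) ≤ a*Real.cos α*R^2*Real.sin θ := by
            nlinarith [mul_le_mul_of_nonneg_right hRb hsθ]
          have e2 : 2*a*Real.cos α*R^2*Real.sin θ ≤ 2*a*(R*Real.cos θ * (R*Real.sin θ)) := by
            nlinarith [mul_le_mul_of_nonneg_right hcθ hsθ, sq_nonneg R,
              mul_nonneg (mul_nonneg (le_of_lt ha) (sq_nonneg R)) hsθ,
              mul_nonneg (mul_nonneg (mul_nonneg (by linarith : (0:ℝ) ≤ 2*a) (sq_nonneg R)) hsθ)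
                (by linarith : (0:ℝ) ≤ Real.cos θ - Real.cos α)]
          have e3 : a*Real.cos α*R^2*(2/Real.pi*θ) ≤ a*Real.cos α*R^2*Real.sin θ :=
            mul_le_mul_of_nonneg_left hjord (by positivity)
          have e4 : k*R^2*θ = a*Real.cos α*R^2*(2/Real.pi*θ) := by rw [hk]; ring
          linarith
        rw [norm_mul, ray_abs _ _ hR0.le]
        have h5 : ‖f ((R:ℂ) * Complex.exp ((θ:ℂ) * Complex.I))‖
            ≤ C * Real.exp (-(k*R^2*θ)) :=
          h.trans (mul_le_mul_of_nonneg_left (Real.exp_le_exp.mpr hexp) hC)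
        calc ‖f ((R:ℂ) * Complex.exp ((θ:ℂ) * Complex.I))‖ * R
            ≤ (C * Real.exp (-(k*R^2*θ))) * R := mul_le_mul_of_nonneg_right h5 hR0.le
          _ = R * C * Real.exp (-(k*R^2*θ)) := by ring
      rw [hArc_norm]
      have hI1 : IntervalIntegrable (fun θ : ℝ => ‖f ((R:ℂ) * Complex.exp ((θ:ℂ) * Complex.I)) *
          ((R:ℂ) * Complex.exp ((θ:ℂ) * Complex.I))‖) volume 0 α :=
        harc_cont.norm.intervalIntegrable
      have hI2 : IntervalIntegrable (fun θ : ℝ => R * C * Real.exp (-(k*R^2*θ))) volume 0 α :=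
        (Continuous.intervalIntegrable (by fun_prop) 0 α)
      have hval : (∫ θ in (0:ℝ)..α, R * C * Real.exp (-(k*R^2*θ)))
          = R * C * ((1 - Real.exp (-(k*R^2*α)))/(k*R^2)) := by
        rw [intervalIntegral.integral_const_mul, integral_exp_neg_mul' (k*R^2) α (by positivity)]
      have hlast : R * C * ((1 - Real.exp (-(k*R^2*α)))/(k*R^2)) ≤ C/k/R := by
        have hE : 0 ≤ Real.exp (-(k*R^2*α)) := Real.exp_nonneg _
        have h9 : R*C*((1 - Real.exp (-(k*R^2*α)))/(k*R^2))
            = (C*(1 - Real.exp (-(k*R^2*α))))/(k*R) := by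
          field_simp
        rw [h9, div_div]
        exact (div_le_div_iff_of_pos_right (mul_pos hkpos hR0)).mpr
          (by nlinarith [mul_nonneg hC hE])
      calc ‖∫ θ in (0:ℝ)..α, f ((R:ℂ) * Complex.exp ((θ:ℂ) * Complex.I)) *
              ((R:ℂ) * Complex.exp ((θ:ℂ) * Complex.I))‖
          ≤ ∫ θ in (0:ℝ)..α, ‖f ((R:ℂ) * Complex.exp ((θ:ℂ) * Complex.I)) *
              ((R:ℂ) * Complex.exp ((θ:ℂ) * Complex.I))‖ :=
            intervalIntegral.norm_integral_le_integral_norm hα0.le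
        _ ≤ ∫ θ in (0:ℝ)..α, R * C * Real.exp (-(k*R^2*θ)) :=
            intervalIntegral.integral_mono_on hα0.le hI1 hI2 hbnd
        _ = R * C * ((1 - Real.exp (-(k*R^2*α)))/(k*R^2)) := hval
        _ ≤ C/k/R := hlast
    · exact tendsto_const_nhds.div_atTop tendsto_id
  -- bounds on the real axis and ray for small-interval integrals
  have hbd_axis : ∀ y : ℝ, 0 ≤ y → ‖f ((y:ℝ):ℂ)‖ ≤ C := by
    intro y hy
    have h := hbd _ (real_mem_sector hα0.le hαπ hy)
    simpa using h
  have hbd_ray : ∀ y : ℝ, 0 ≤ y → ‖g y‖ ≤ C * Real.exp (c2^2/(4*c1)) := by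
    intro y hy
    have h := hray_bd y hy
    refine h.trans (mul_le_mul_of_nonneg_left (Real.exp_le_exp.mpr ?_) hC)
    rw [le_div_iff₀ (by positivity)]
    nlinarith [sq_nonneg (2*c1*y - c2)]
  have hcont_axis : ContinuousOn (fun y : ℝ => f ((y:ℝ):ℂ)) (Ici 0) := by
    refine (hcont.mono hsub).comp Complex.continuous_ofReal.continuousOn ?_
    intro y hy
    exact real_mem_sector hα0.le hαπ hy
  have hII : ∀ u v : ℝ, 0 ≤ u → 0 ≤ v → IntervalIntegrable (fun y : ℝ => f ((y:ℝ):ℂ)) volume u v :=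
    fun u v hu hv => (hcont_axis.mono (fun y hy => by
      rcases le_total u v with h|h
      · rw [uIcc_of_le h] at hy; exact le_trans hu hy.1
      · rw [uIcc_of_ge h] at hy; exact le_trans hv hy.1)).intervalIntegrable
  have hIIg : ∀ u v : ℝ, 0 ≤ u → 0 ≤ v → IntervalIntegrable g volume u v :=
    fun u v hu hv => (hcont_ray.mono (fun y hy => by
      rcases le_total u v with h|h
      · rw [uIcc_of_le h] at hy; exact le_trans hu hy.1
      · rw [uIcc_of_ge h] at hy; exact le_trans hv hy.1)).intervalIntegrable
  -- small integrals tend to zero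
  have T0 : Tendsto (fun δ : ℝ => ∫ y in (0:ℝ)..δ, f ((y:ℝ):ℂ)) (𝓝[>] 0) (𝓝 0) := by
    apply squeeze_zero_norm' (a := fun δ : ℝ => C * δ)
    · filter_upwards [self_mem_nhdsWithin] with δ (hδ : (0:ℝ) < δ)
      have h1 : ∀ y ∈ Set.uIoc (0:ℝ) δ, ‖f ((y:ℝ):ℂ)‖ ≤ C := by
        intro y hy
        rw [uIoc_of_le hδ.le] at hy
        exact hbd_axis y hy.1.le
      have := intervalIntegral.norm_integral_le_of_norm_le_const h1
      rwa [sub_zero, abs_of_nonneg hδ.le] at this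
    · have h7 : Continuous (fun δ : ℝ => C * δ) := continuous_const.mul continuous_id
      have h8 : Tendsto (fun δ : ℝ => C * δ) (𝓝 0) (𝓝 0) := by simpa using h7.tendsto 0
      exact h8.mono_left nhdsWithin_le_nhds
  have T0g : Tendsto (fun δ : ℝ => ∫ y in (0:ℝ)..δ, g y) (𝓝[>] 0) (𝓝 0) := by
    apply squeeze_zero_norm' (a := fun δ : ℝ => (C * Real.exp (c2^2/(4*c1))) * δ)
    · filter_upwards [self_mem_nhdsWithin] with δ (hδ : (0:ℝ) < δ)
      have h1 : ∀ y ∈ Set.uIoc (0:ℝ) δ, ‖g y‖ ≤ C * Real.exp (c2^2/(4*c1)) := by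
        intro y hy
        rw [uIoc_of_le hδ.le] at hy
        exact hbd_ray y hy.1.le
      have := intervalIntegral.norm_integral_le_of_norm_le_const h1
      rwa [sub_zero, abs_of_nonneg hδ.le] at this
    · have h7 : Continuous (fun δ : ℝ => (C * Real.exp (c2^2/(4*c1))) * δ) :=
        continuous_const.mul continuous_id
      have h8 : Tendsto (fun δ : ℝ => (C * Real.exp (c2^2/(4*c1))) * δ) (𝓝 0) (𝓝 0) := by
        simpa using h7.tendsto 0
      exact h8.mono_left nhdsWithin_le_nhds
  -- the identity for each R > 0
  have hid : ∀ R : ℝ, 0 < R → (∫ y in (0:ℝ)..R, f ((y:ℝ):ℂ))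
      = Complex.exp (α * Complex.I) * (∫ y in (0:ℝ)..R, g y) - Arc R := by
    intro R hR
    have T1 : Tendsto (fun δ : ℝ => ∫ y in δ..R, f ((y:ℝ):ℂ)) (𝓝[>] 0)
        (𝓝 (∫ y in (0:ℝ)..R, f ((y:ℝ):ℂ))) := by
      have heq : ∀ᶠ δ in 𝓝[>] (0:ℝ), (∫ y in δ..R, f ((y:ℝ):ℂ))
          = (∫ y in (0:ℝ)..R, f ((y:ℝ):ℂ)) - ∫ y in (0:ℝ)..δ, f ((y:ℝ):ℂ) := by
        filter_upwards [self_mem_nhdsWithin] with δ (hδ : (0:ℝ) < δ)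
        rw [intervalIntegral.integral_interval_sub_left (hII 0 R le_rfl hR.le)
          (hII 0 δ le_rfl hδ.le)]
      exact Tendsto.congr' (Filter.EventuallyEq.symm heq)
        (by simpa using tendsto_const_nhds.sub T0)
    have T1g : Tendsto (fun δ : ℝ => ∫ y in δ..R, g y) (𝓝[>] 0)
        (𝓝 (∫ y in (0:ℝ)..R, g y)) := by
      have heq : ∀ᶠ δ in 𝓝[>] (0:ℝ), (∫ y in δ..R, g y)
          = (∫ y in (0:ℝ)..R, g y) - ∫ y in (0:ℝ)..δ, g y := by
        filter_upwards [self_mem_nhdsWithin] with δ (hδ : (0:ℝ) < δ)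
        rw [intervalIntegral.integral_interval_sub_left (hIIg 0 R le_rfl hR.le)
          (hIIg 0 δ le_rfl hδ.le)]
      exact Tendsto.congr' (Filter.EventuallyEq.symm heq)
        (by simpa using tendsto_const_nhds.sub T0g)
    have Tr : Tendsto (fun δ : ℝ => Complex.exp (α * Complex.I) * (∫ y in δ..R, g y)
        - Arc R + Arc δ) (𝓝[>] 0)
        (𝓝 (Complex.exp (α * Complex.I) * (∫ y in (0:ℝ)..R, g y) - Arc R + 0)) :=
      ((tendsto_const_nhds.mul T1g).sub tendsto_const_nhds).add hArc0
    have heq2 : ∀ᶠ δ in 𝓝[>] (0:ℝ), (∫ y in δ..R, f ((y:ℝ):ℂ))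
        = Complex.exp (α * Complex.I) * (∫ y in δ..R, g y) - Arc R + Arc δ := by
      filter_upwards [self_mem_nhdsWithin] with δ (hδ : (0:ℝ) < δ)
      exact rect_id ⟨hα0, hα2⟩ hΩ hsub hf hδ hR
    have := tendsto_nhds_unique (Tendsto.congr' heq2 T1) Tr
    rw [add_zero] at this
    exact this
  refine ⟨hint, ?_⟩
  have hfin : Tendsto (fun R : ℝ => Complex.exp (α * Complex.I) * (∫ y in (0:ℝ)..R, g y) - Arc R)
      atTop (𝓝 (Complex.exp (α * Complex.I) * ∫ y in Set.Ioi (0:ℝ), g y)) := by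
    have h1 := intervalIntegral_tendsto_integral_Ioi 0 hint tendsto_id
    simpa using (tendsto_const_nhds.mul h1).sub hArcInf
  refine Tendsto.congr' ?_ hfin
  filter_upwards [eventually_gt_atTop 0] with R hR
  exact (hid R hR).symm

set_option maxHeartbeats 1000000 in
theorem Psi0_exists {α : ℝ} (hα : α ∈ Set.Ioo 0 (Real.pi / 2))
    {Ω : Set ℂ} (hΩ : IsOpen Ω) (hsub : sector α ⊆ Ω)
    {F : ℂ → ℂ} (hF : DifferentiableOn ℂ F Ω)
    {A B : ℝ} (hA : 0 ≤ A) (hB : 0 ≤ B)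
    (hbound : ∀ z ∈ sector α, ‖F z‖ ≤ A * Real.exp (B * z.im))
    (t x : ℝ) (ht : 0 < t) (hx : x ≠ 0) :
    IntegrableOn
        (fun y : ℝ => G0 t x ((y : ℂ) * Complex.exp (α * Complex.I)) *
          F ((y : ℂ) * Complex.exp (α * Complex.I))) (Set.Ioi 0) ∧
    Tendsto (fun R : ℝ => ∫ y in (0:ℝ)..R, G0 t x (y : ℂ) * F (y : ℂ)) atTop
      (𝓝 (Complex.exp (α * Complex.I) *
        ∫ y in Set.Ioi (0:ℝ), G0 t x ((y : ℂ) * Complex.exp (α * Complex.I)) *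
          F ((y : ℂ) * Complex.exp (α * Complex.I)))) := by
  obtain ⟨hα0, hα2⟩ := hα
  have hGdiff : Differentiable ℂ (fun z : ℂ => G0 t x z) := by
    have h1 : Differentiable ℂ (fun z : ℂ =>
        -(((|x| : ℝ) : ℂ) + z)^2 / (4 * Complex.I * (t : ℂ))) := by
      apply Differentiable.div_const
      apply Differentiable.neg
      apply Differentiable.pow
      exact (differentiable_const _).add differentiable_id
    exact (h1.cexp).const_mul _
  have hfd : DifferentiableOn ℂ (fun z => G0 t x z * F z) Ω :=
    (hGdiff.differentiableOn).mul hF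
  have ht0 : (t:ℂ) ≠ 0 := by exact_mod_cast ht.ne'
  have habs : ∀ z : ℂ, ‖G0 t x z‖
      = (2*Real.sqrt (Real.pi*t))⁻¹ * Real.exp (-((|x| + z.re) * z.im)/(2*t)) := by
    intro z
    have hsq : ‖2 * sqipt t‖ = 2 * Real.sqrt (Real.pi * t) := by
      rw [sqipt, norm_mul, norm_mul, Complex.norm_exp, Complex.norm_two, Complex.norm_real,
        Real.norm_of_nonneg (Real.sqrt_nonneg _)]
      norm_num
    have h1 : -(((|x|:ℝ):ℂ) + z)^2 / (4*Complex.I*(t:ℂ))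
        = ((((|x|:ℝ):ℂ) + z)^2 * Complex.I) / (((4*t:ℝ):ℂ)) := by
      rw [div_eq_div_iff (by simp [Complex.I_ne_zero, ht0]) (by push_cast; simp [ht0])]
      push_cast
      linear_combination (-(4*(t:ℂ)) * (((|x|:ℝ):ℂ)+z)^2) * Complex.I_sq
    rw [G0, norm_mul, norm_inv, hsq, h1, Complex.norm_exp, Complex.div_ofReal_re,
      Complex.mul_I_re]
    congr 1
    simp only [pow_two, Complex.mul_im, Complex.add_re, Complex.add_im, Complex.ofReal_re,
      Complex.ofReal_im]
    field_simp
    ring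
  have hsqrt : 0 < Real.sqrt (Real.pi*t) := Real.sqrt_pos.mpr (by positivity)
  have hbound' : ∀ z ∈ sector α, ‖G0 t x z * F z‖
      ≤ ((2*Real.sqrt (Real.pi*t))⁻¹ * A) *
        Real.exp (-(2*(1/(4*t))) * (z.re*z.im) + B*z.im) := by
    intro z hz
    have him := sector_im_nonneg hz
    have hFz := hbound z hz
    rw [norm_mul, habs z]
    calc (2*Real.sqrt (Real.pi*t))⁻¹ * Real.exp (-((|x| + z.re) * z.im)/(2*t))
          * ‖F z‖
        ≤ (2*Real.sqrt (Real.pi*t))⁻¹ * Real.exp (-((|x| + z.re) * z.im)/(2*t))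
          * (A * Real.exp (B*z.im)) := by
          apply mul_le_mul_of_nonneg_left hFz (by positivity)
      _ = ((2*Real.sqrt (Real.pi*t))⁻¹ * A) *
          Real.exp (-((|x| + z.re) * z.im)/(2*t) + B*z.im) := by
          rw [Real.exp_add]; ring
      _ ≤ ((2*Real.sqrt (Real.pi*t))⁻¹ * A) *
          Real.exp (-(2*(1/(4*t))) * (z.re*z.im) + B*z.im) := by
          apply mul_le_mul_of_nonneg_left _ (mul_nonneg (by positivity) hA)
          apply Real.exp_le_exp.mpr
          have h2 : 0 ≤ |x| * z.im := mul_nonneg (abs_nonneg x) him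
          have h3 : -(2*(1/(4*t))) * (z.re*z.im) = -(z.re*z.im)/(2*t) := by
            field_simp
            ring
          have h4 : -((|x| + z.re) * z.im)/(2*t) ≤ -(z.re*z.im)/(2*t) := by
            apply div_le_div_of_nonneg_right ?_ (by linarith)
            · nlinarith
          rw [h3]
          linarith
  have hCnn : 0 ≤ (2*Real.sqrt (Real.pi*t))⁻¹ * A := mul_nonneg (by positivity) hA
  have ha' : 0 < 1/(4*t) := by positivity
  have key := sector_fresnel (f := fun z => G0 t x z * F z) ⟨hα0, hα2⟩ hΩ hsub hfd
    hCnn ha' hB hbound'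
  exact key
end

section
/- Let F be entire with F(x) = e^{ikx} on ℝ for k ∈ ℝ. For t > 0 and x ∈ ℝ, the rotated integral (with α = π/4) Ψ₀(t,x;e^{ik·}) = (1/(2√(πt))) ∫₀^∞ e^{-(|x| + y√i)²/(4it)} e^{iky√i} dy equals (1/2) e^{-x²/(4it)} Λ(|x|/(2√(it)) - ik√(it)). -/
open MeasureTheory intervalIntegral Set Filter Topology

set_option maxHeartbeats 1000000

lemma norm_cexp_shift (u : ℝ) (d : ℂ) :
    ‖Complex.exp (-((u:ℂ) + d)^2)‖ = Real.exp (d.im^2 - (u + d.re)^2) := by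
  rw [Complex.norm_exp]
  congr 1
  simp [pow_two, Complex.mul_re, Complex.add_re, Complex.add_im]


lemma integrable_cexp_shift (d : ℂ) :
    Integrable (fun u : ℝ => Complex.exp (-((u:ℂ) + d)^2)) := by
  have h : Integrable (fun u : ℝ => Real.exp (d.im^2) * Real.exp (-(u + d.re)^2)) := by
    have := ((integrable_exp_neg_mul_sq (one_pos)).comp_add_right d.re).const_mul
      (Real.exp (d.im^2))
    simpa using this
  refine h.mono' ?_ ?_
  · exact (Complex.continuous_exp.comp (by continuity)).aestronglyMeasurable
  · refine Eventually.of_forall fun u => ?_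
    rw [norm_cexp_shift, sub_eq_add_neg, Real.exp_add]

lemma hasDerivAt_inner (c : ℂ) (u r : ℝ) :
    HasDerivAt (fun r : ℝ => Complex.exp (-((u:ℂ) + (r:ℂ) * c)^2))
      (-2 * c * ((u:ℂ) + (r:ℂ) * c) * Complex.exp (-((u:ℂ) + (r:ℂ) * c)^2)) r := by
  have h1 : HasDerivAt (fun r : ℝ => ((u:ℂ) + (r:ℂ) * c)) c r := by
    simpa using ((hasDerivAt_id r).ofReal_comp.mul_const c).const_add (u:ℂ)
  have h2 := (((h1.mul h1).neg).cexp)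
  simp only [Pi.neg_apply, Pi.mul_apply] at h2
  have e : ∀ r : ℝ, Complex.exp (-((u:ℂ) + (r:ℂ) * c)^2)
      = Complex.exp (-(((u:ℂ) + (r:ℂ) * c) * ((u:ℂ) + (r:ℂ) * c))) := by
    intro r; rw [pow_two]
  simp only [e]
  convert h2 using 1
  ring

lemma hasDerivAt_inner_u (c : ℂ) (s u : ℝ) :
    HasDerivAt (fun u : ℝ => c * Complex.exp (-((u:ℂ) + (s:ℂ) * c)^2))
      (-2 * c * ((u:ℂ) + (s:ℂ) * c) * Complex.exp (-((u:ℂ) + (s:ℂ) * c)^2)) u := by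
  have h1 : HasDerivAt (fun u : ℝ => ((u:ℂ) + (s:ℂ) * c)) 1 u := by
    simpa using ((hasDerivAt_id u).ofReal_comp).add_const ((s:ℂ) * c)
  have h2 := ((((h1.mul h1).neg).cexp).const_mul c)
  simp only [Pi.neg_apply, Pi.mul_apply] at h2
  have e : ∀ u : ℝ, Complex.exp (-((u:ℂ) + (s:ℂ) * c)^2)
      = Complex.exp (-(((u:ℂ) + (s:ℂ) * c) * ((u:ℂ) + (s:ℂ) * c))) := by
    intro u; rw [pow_two]
  simp only [e]
  convert h2 using 1
  · rfl
  ring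

lemma tendsto_cexp_shift (d c : ℂ) :
    Tendsto (fun u : ℝ => c * Complex.exp (-((u:ℂ) + d)^2)) atTop (𝓝 0) := by
  rw [tendsto_zero_iff_norm_tendsto_zero]
  have hb : Tendsto (fun u : ℝ => ‖c‖ * Real.exp (d.im^2 - (u + d.re)^2)) atTop (𝓝 0) := by
    have h1 : Tendsto (fun u : ℝ => (u + d.re)^2) atTop atTop := by
      exact (tendsto_pow_atTop two_ne_zero).comp
        (tendsto_atTop_add_const_right atTop d.re tendsto_id)
    have h2 : Tendsto (fun u : ℝ => d.im^2 - (u + d.re)^2) atTop atBot := by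
      simpa [sub_eq_add_neg] using
        tendsto_atBot_add_const_left atTop (d.im^2) (tendsto_neg_atTop_atBot.comp h1)
    simpa using (Real.tendsto_exp_atBot.comp h2).const_mul ‖c‖
  refine squeeze_zero (fun u => norm_nonneg _) (fun u => ?_) hb
  rw [norm_mul, norm_cexp_shift]

lemma bound_est (c : ℂ) (M : ℝ) (u r : ℝ) (hu : 0 < u) (hr : |r| ≤ M) :
    ‖-2*c*((u:ℂ) + (r:ℂ)*c) * Complex.exp (-((u:ℂ) + (r:ℂ)*c)^2)‖ ≤
      2*‖c‖*(1 + M*‖c‖)*Real.exp (2*M^2*‖c‖^2) * Real.exp (-(4⁻¹) * u^2) := by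
  have hM : 0 ≤ M := le_trans (abs_nonneg r) hr
  have hnorm : ‖-2*c*((u:ℂ) + (r:ℂ)*c) * Complex.exp (-((u:ℂ) + (r:ℂ)*c)^2)‖
      = 2*‖c‖*‖(u:ℂ) + (r:ℂ)*c‖ * Real.exp (((r:ℂ)*c).im^2 - (u + ((r:ℂ)*c).re)^2) := by
    rw [norm_mul, norm_cexp_shift u ((r:ℂ)*c), norm_mul, norm_mul]
    simp [mul_assoc]
  rw [hnorm]
  have him : ((r:ℂ)*c).im = r * c.im := by simp
  have hre : ((r:ℂ)*c).re = r * c.re := by simp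
  have hcre : c.re^2 ≤ ‖c‖^2 := by
    nlinarith [Complex.abs_re_le_norm c, abs_nonneg c.re, sq_abs c.re, norm_nonneg c]
  have hcim : c.im^2 ≤ ‖c‖^2 := by
    nlinarith [Complex.abs_im_le_norm c, abs_nonneg c.im, sq_abs c.im, norm_nonneg c]
  have hr2 : r^2 ≤ M^2 := by nlinarith [abs_nonneg r, sq_abs r]
  have hexp : ((r:ℂ)*c).im^2 - (u + ((r:ℂ)*c).re)^2 ≤ 2*M^2*‖c‖^2 - 4⁻¹*u^2 - 4⁻¹*u^2 := by
    rw [him, hre]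
    have h1 : (u + r*c.re)^2 ≥ u^2/2 - (r*c.re)^2 := by nlinarith [sq_nonneg (u + 2*r*c.re)]
    have h2 : (r*c.im)^2 ≤ M^2*‖c‖^2 := by
      rw [mul_pow]; exact mul_le_mul hr2 hcim (sq_nonneg _) (sq_nonneg _)
    have h3 : (r*c.re)^2 ≤ M^2*‖c‖^2 := by
      rw [mul_pow]; exact mul_le_mul hr2 hcre (sq_nonneg _) (sq_nonneg _)
    nlinarith
  have hne : ‖(u:ℂ) + (r:ℂ)*c‖ ≤ u + M*‖c‖ := by
    refine (norm_add_le _ _).trans ?_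
    gcongr
    · simp [abs_of_pos hu]
    · rw [norm_mul]; gcongr; simpa using hr
  have hu4 : u * Real.exp (-(4⁻¹) * u^2) ≤ 1 := by
    have h5 : u ≤ Real.exp (4⁻¹ * u^2) := by
      have := Real.add_one_le_exp (4⁻¹ * u^2)
      nlinarith [sq_nonneg (u/2 - 1)]
    calc u * Real.exp (-(4⁻¹) * u^2) ≤ Real.exp (4⁻¹*u^2) * Real.exp (-(4⁻¹) * u^2) := by
          have := (Real.exp_pos (-(4⁻¹) * u^2)).le
          nlinarith
      _ = 1 := by rw [← Real.exp_add]; norm_num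
  calc 2*‖c‖*‖(u:ℂ) + (r:ℂ)*c‖ * Real.exp (((r:ℂ)*c).im^2 - (u + ((r:ℂ)*c).re)^2)
      ≤ 2*‖c‖*(u + M*‖c‖) * Real.exp (2*M^2*‖c‖^2 - 4⁻¹*u^2 - 4⁻¹*u^2) := by
        have h6 := Real.exp_le_exp.2 hexp
        have h7 : (0:ℝ) ≤ 2*‖c‖ := by positivity
        have h8 := (Real.exp_pos (((r:ℂ)*c).im^2 - (u + ((r:ℂ)*c).re)^2)).le
        have h9 : (0:ℝ) ≤ u + M*‖c‖ := by positivity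
        nlinarith [norm_nonneg ((u:ℂ) + (r:ℂ)*c), mul_le_mul hne h6 h8 h9]
    _ = (2*‖c‖) * ((u * Real.exp (-(4⁻¹)*u^2) + M*‖c‖ * Real.exp (-(4⁻¹)*u^2))
          * Real.exp (2*M^2*‖c‖^2) * Real.exp (-(4⁻¹)*u^2)) := by
        rw [show (2*M^2*‖c‖^2 - 4⁻¹*u^2 - 4⁻¹*u^2) = (2*M^2*‖c‖^2) + (-(4⁻¹)*u^2) + (-(4⁻¹)*u^2) by ring,
          Real.exp_add, Real.exp_add]
        ring
    _ ≤ (2*‖c‖) * ((1 + M*‖c‖ * 1) * Real.exp (2*M^2*‖c‖^2) * Real.exp (-(4⁻¹)*u^2)) := by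
        have hle1 : Real.exp (-(4⁻¹)*u^2) ≤ 1 := Real.exp_le_one_iff.2 (by nlinarith [sq_nonneg u])
        have he := (Real.exp_pos (-(4⁻¹)*u^2)).le
        have hMc : (0:ℝ) ≤ M*‖c‖ := by positivity
        gcongr
    _ = 2*‖c‖*(1 + M*‖c‖)*Real.exp (2*M^2*‖c‖^2) * Real.exp (-(4⁻¹) * u^2) := by ring

lemma cont_aux (c : ℂ) (r : ℝ) :
    Continuous (fun u : ℝ => Complex.exp (-((u:ℂ) + (r:ℂ)*c)^2)) :=
  Complex.continuous_exp.comp (by continuity)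

lemma cont_aux' (c : ℂ) (r : ℝ) :
    Continuous (fun u : ℝ => -2*c*((u:ℂ) + (r:ℂ)*c) * Complex.exp (-((u:ℂ) + (r:ℂ)*c)^2)) := by
  exact (continuous_const.mul (by continuity)).mul (cont_aux c r)

lemma hasDeriv_g (c : ℂ) (s : ℝ) :
    HasDerivAt (fun r : ℝ => ∫ u in Ioi (0:ℝ), Complex.exp (-((u:ℂ) + (r:ℂ)*c)^2))
      (-(c * Complex.exp (-((s:ℂ)*c)^2))) s := by
  set M : ℝ := |s| + 1 with hM
  set C : ℝ := 2*‖c‖*(1 + M*‖c‖)*Real.exp (2*M^2*‖c‖^2) with hC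
  have key := hasDerivAt_integral_of_dominated_loc_of_deriv_le
    (F := fun (r : ℝ) (u : ℝ) => Complex.exp (-((u:ℂ) + (r:ℂ)*c)^2))
    (F' := fun (r : ℝ) (u : ℝ) => -2*c*((u:ℂ) + (r:ℂ)*c) * Complex.exp (-((u:ℂ) + (r:ℂ)*c)^2))
    (x₀ := s) (bound := fun u => C * Real.exp (-(4⁻¹) * u^2))
    (μ := volume.restrict (Ioi (0:ℝ))) (Metric.ball_mem_nhds s one_pos)
    (Eventually.of_forall fun r => (cont_aux c r).aestronglyMeasurable)
    ((integrable_cexp_shift ((s:ℂ)*c)).integrableOn)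
    ((cont_aux' c s).aestronglyMeasurable)
    ?_ ?_ ?_
  · obtain ⟨hint, hd⟩ := key
    have heval : (∫ u in Ioi (0:ℝ), -2*c*((u:ℂ) + (s:ℂ)*c) * Complex.exp (-((u:ℂ) + (s:ℂ)*c)^2))
        = -(c * Complex.exp (-((s:ℂ)*c)^2)) := by
      have := integral_Ioi_of_hasDerivAt_of_tendsto'
        (f := fun u : ℝ => c * Complex.exp (-((u:ℂ) + (s:ℂ)*c)^2))
        (f' := fun u : ℝ => -2*c*((u:ℂ) + (s:ℂ)*c) * Complex.exp (-((u:ℂ) + (s:ℂ)*c)^2))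
        (m := 0) (fun u _ => hasDerivAt_inner_u c s u) hint (tendsto_cexp_shift ((s:ℂ)*c) c)
      simpa using this
    rwa [heval] at hd
  · refine (ae_restrict_iff' measurableSet_Ioi).2 (Eventually.of_forall fun u hu => ?_)
    intro r hr
    refine bound_est c M u r hu ?_
    have := mem_ball_iff_norm.1 hr
    rw [Real.norm_eq_abs] at this
    calc |r| = |s + (r - s)| := by ring_nf
      _ ≤ |s| + |r - s| := abs_add_le _ _
      _ ≤ |s| + 1 := by linarith
  · exact ((integrable_exp_neg_mul_sq (by norm_num : (0:ℝ) < 4⁻¹)).const_mul C).restrict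
  · exact Eventually.of_forall fun u => fun r _ => hasDerivAt_inner c u r

lemma key_int (c : ℂ) :
    ∫ u in Ioi (0:ℝ), Complex.exp (-((u:ℂ) + c)^2)
      = ((Real.sqrt Real.pi / 2 : ℝ) : ℂ) * (1 - cerf c) := by
  set h : ℝ → ℂ := fun s =>
    (∫ u in Ioi (0:ℝ), Complex.exp (-((u:ℂ) + (s:ℂ)*c)^2))
      + ∫ r in (0:ℝ)..s, c * Complex.exp (-((r:ℂ)*c)^2) with hh
  have hcont : Continuous (fun r : ℝ => c * Complex.exp (-((r:ℂ)*c)^2)) := by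
    exact continuous_const.mul (Complex.continuous_exp.comp (by continuity))
  have hderiv : ∀ s, HasDerivAt h 0 s := by
    intro s
    have h1 := hasDeriv_g c s
    have h2 : HasDerivAt (fun s : ℝ => ∫ r in (0:ℝ)..s, c * Complex.exp (-((r:ℂ)*c)^2))
        (c * Complex.exp (-((s:ℂ)*c)^2)) s :=
      intervalIntegral.integral_hasDerivAt_right (hcont.intervalIntegrable 0 s)
        (hcont.stronglyMeasurableAtFilter _ _) hcont.continuousAt
    have h3 := h1.add h2
    rw [show (-(c * Complex.exp (-((s:ℂ)*c)^2)) + c * Complex.exp (-((s:ℂ)*c)^2)) = 0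
      from neg_add_cancel _] at h3
    exact h3
  have hconst : h 1 = h 0 :=
    is_const_of_deriv_eq_zero (fun s => (hderiv s).differentiableAt)
      (fun s => (hderiv s).deriv) 1 0
  have h0 : h 0 = ((Real.sqrt Real.pi / 2 : ℝ) : ℂ) := by
    rw [hh]
    simp only [Complex.ofReal_zero, zero_mul, add_zero, intervalIntegral.integral_same]
    have hg := integral_gaussian_complex_Ioi (b := 1) (by norm_num)
    have heq : ∀ u : ℝ, Complex.exp (-((u:ℂ))^2) = Complex.exp (-1 * (u:ℂ)^2) := by
      intro u; ring_nf
    simp only [heq]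
    rw [hg, div_one]
    have hhalf : ((Real.pi : ℝ):ℂ) ^ ((1:ℂ)/2) = ((Real.sqrt Real.pi : ℝ):ℂ) := by
      rw [show ((1:ℂ)/2) = (((1/2 : ℝ):ℝ):ℂ) by norm_num,
        ← Complex.ofReal_cpow Real.pi_pos.le]
      rw [← Real.sqrt_eq_rpow]
    rw [show ((Real.pi : ℂ)) = ((Real.pi : ℝ):ℂ) by norm_num] at *
    rw [hhalf]
    push_cast
    ring
  have h1eq : h 1 = (∫ u in Ioi (0:ℝ), Complex.exp (-((u:ℂ) + c)^2))
      + ((Real.sqrt Real.pi / 2 : ℝ) : ℂ) * cerf c := by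
    rw [hh]
    simp only [Complex.ofReal_one, one_mul]
    congr 1
    rw [cerf]
    have hsp : ((Real.sqrt Real.pi : ℝ) : ℂ) ≠ 0 := by
      norm_cast
      positivity
    field_simp
    push_cast
    ring
  have := hconst
  rw [h0, h1eq] at this
  linear_combination this


lemma exp_arith (w T X K y : ℂ) (hw : w ≠ 0) (hT : T ≠ 0) :
    -(X + y*w)^2/(4*w^2*T^2) + w^2*K*y*w =
      -X^2/(4*w^2*T^2) + ((X/(2*(w*T)) - w^2*K*(w*T))^2
        - (y/(2*T) + (X/(2*(w*T)) - w^2*K*(w*T)))^2) := by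
  have e1 : (X/(2*(w*T)) - w^2*K*(w*T)) = (X - 2*w^4*K*T^2)/(2*(w*T)) := by
    field_simp
  have e2 : (y/(2*T) + (X - 2*w^4*K*T^2)/(2*(w*T))) = (y*w + X - 2*w^4*K*T^2)/(2*(w*T)) := by
    field_simp
    ring
  have hD : ((4:ℂ)*w^2*T^2) ≠ 0 := by simp [hw, hT]
  have e3 : (2*(w*T))^2 = 4*w^2*T^2 := by ring
  rw [e1, e2, div_pow, div_pow, ← sub_div, e3, ← add_div, div_add' _ _ _ hD,
    div_eq_div_iff hD hD]
  ring

lemma subst_int (c : ℂ) {τ : ℝ} (hτ : 0 < τ) :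
    ∫ y in Ioi (0:ℝ), Complex.exp (-((y:ℂ)/(2*(τ:ℂ)) + c)^2)
      = ((2*τ : ℝ) : ℂ) * ∫ u in Ioi (0:ℝ), Complex.exp (-((u:ℂ) + c)^2) := by
  have h2τ : (0:ℝ) < (2*τ)⁻¹ := by positivity
  have h := integral_comp_mul_left_Ioi
    (fun u : ℝ => Complex.exp (-((u:ℂ) + c)^2)) 0 h2τ
  simp only [mul_zero] at h
  have heq : ∀ y : ℝ, Complex.exp (-((((2*τ)⁻¹ * y : ℝ):ℂ) + c)^2)
      = Complex.exp (-((y:ℂ)/(2*(τ:ℂ)) + c)^2) := by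
    intro y
    congr 2
    push_cast
    rw [div_eq_inv_mul, mul_inv]
  simp only [heq] at h
  rw [h, inv_inv, Complex.real_smul]

theorem Psi0_plane_wave (k t x : ℝ) (ht : 0 < t) :
    (1 / (2 * (Real.sqrt (Real.pi * t) : ℂ))) *
        ∫ y in Set.Ioi (0:ℝ),
          Complex.exp (-(((|x| : ℝ) : ℂ) + (y : ℂ) * Complex.exp (Real.pi / 4 * Complex.I))^2 /
              (4 * Complex.I * (t : ℂ))) *
            Complex.exp (Complex.I * (k : ℂ) * (y : ℂ) * Complex.exp (Real.pi / 4 * Complex.I)) =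
      (1 / 2) * Complex.exp (-(x : ℂ)^2 / (4 * Complex.I * (t : ℂ))) *
        Lam (((|x| : ℝ) : ℂ) / (2 * sqit t) - Complex.I * (k : ℂ) * sqit t) := by
  have hπt : Real.sqrt (Real.pi * t) = Real.sqrt Real.pi * Real.sqrt t :=
    Real.sqrt_mul Real.pi_pos.le t
  have hw2 : (Complex.exp (Real.pi / 4 * Complex.I))^2 = Complex.I := by
    rw [sq, ← Complex.exp_add]
    have h : ((Real.pi:ℂ) / 4 * Complex.I + (Real.pi:ℂ) / 4 * Complex.I)
        = ((Real.pi/2 : ℝ):ℂ) * Complex.I := by push_cast; ring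
    rw [h, Complex.exp_mul_I, ← Complex.ofReal_cos, ← Complex.ofReal_sin,
      Real.cos_pi_div_two, Real.sin_pi_div_two]
    simp
  simp only [sqit]
  set w : ℂ := Complex.exp (Real.pi / 4 * Complex.I) with hwdef
  have hw0 : w ≠ 0 := Complex.exp_ne_zero _
  have hT0r : (0:ℝ) < Real.sqrt t := Real.sqrt_pos.2 ht
  set T : ℂ := ((Real.sqrt t : ℝ) : ℂ) with hTdef
  have hT0 : T ≠ 0 := by
    rw [hTdef]
    exact_mod_cast hT0r.ne'
  have hT2 : (t:ℂ) = T^2 := by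
    rw [hTdef]; norm_cast; exact (Real.sq_sqrt ht.le).symm
  set X : ℂ := ((|x| : ℝ) : ℂ) with hXdef
  have hX2 : (x:ℂ)^2 = X^2 := by
    rw [hXdef]; norm_cast; exact (sq_abs x).symm
  have hpt : ∀ y : ℝ,
      Complex.exp (-(X + (y:ℂ) * w)^2 / (4 * Complex.I * (t:ℂ))) *
        Complex.exp (Complex.I * (k:ℂ) * (y:ℂ) * w)
      = (Complex.exp (-(x:ℂ)^2 / (4 * Complex.I * (t:ℂ))) *
          Complex.exp ((X/(2*(w*T)) - Complex.I*(k:ℂ)*(w*T))^2)) *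
        Complex.exp (-((y:ℂ)/(2*T) + (X/(2*(w*T)) - Complex.I*(k:ℂ)*(w*T)))^2) := by
    intro y
    rw [← Complex.exp_add, ← Complex.exp_add, ← Complex.exp_add]
    congr 1
    rw [hX2, hT2, ← hw2]
    linear_combination exp_arith w T X (k:ℂ) (y:ℂ) hw0 hT0
  simp only [hpt]
  rw [MeasureTheory.integral_const_mul, subst_int _ hT0r, key_int]
  simp only [Lam]
  have hsp : ((Real.sqrt Real.pi : ℝ) : ℂ) ≠ 0 := by
    exact_mod_cast (Real.sqrt_pos.2 Real.pi_pos).ne'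
  rw [hπt]
  push_cast
  have hT0' : ((Real.sqrt t : ℝ) : ℂ) ≠ 0 := hT0
  field_simp
end
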